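/- arXiv:1806.10790 — 9 statements merged into one kernel-verified Lean document; each statement's English description precedes it below -/
import Mathlib

section
/- Let A be an m×n real matrix whose columns A_1,…,A_n all have ℓ2-norm 1, and let s ∈ {1,…,n}. Then for every s-sparse vector x ∈ ℝ^n, (1 − μ₁(A, s−1))·‖x‖₂² ≤ ‖Ax‖₂² ≤ (1 + μ₁(A, s−1))·‖x‖₂². -/
open scoped Classical

lemma swap_sum_erase {α : Type*} [DecidableEq α] (S : Finset α) (f : α → α → ℝ) :
    ∑ i ∈ S, ∑ j ∈ S.erase i, f i j = ∑ j ∈ S, ∑ i ∈ S.erase j, f i j := by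
  simp only [← Finset.filter_ne', Finset.sum_filter]
  rw [Finset.sum_comm]
  refine Finset.sum_congr rfl fun j _ => Finset.sum_congr rfl fun i _ => ?_
  simp [ne_comm]


/-- Cumulative coherence function μ₁(A, s) of a matrix `A` with columns `A_1, …, A_n`:
the supremum over index sets `S` with `|S| ≤ s` and indices `i ∉ S` of
`∑_{j ∈ S} |⟨A_i, A_j⟩|`. -/
noncomputable def mu1 {m n : ℕ} (A : Matrix (Fin m) (Fin n) ℝ) (s : ℕ) : ℝ :=
  sSup {t : ℝ | ∃ S : Finset (Fin n), S.card ≤ s ∧ ∃ i : Fin n, i ∉ S ∧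
    t = ∑ j ∈ S, |∑ k : Fin m, A k i * A k j|}

/-- For a matrix with ℓ2-normalized columns and any `s`-sparse vector `x`,
`(1 − μ₁(A, s−1)) ‖x‖₂² ≤ ‖Ax‖₂² ≤ (1 + μ₁(A, s−1)) ‖x‖₂²`. -/
theorem stmt0 {m n : ℕ} (A : Matrix (Fin m) (Fin n) ℝ)
    (hA : ∀ j, ∑ k, (A k j) ^ 2 = 1)
    (s : ℕ) (hs1 : 1 ≤ s) (hsn : s ≤ n)
    (x : Fin n → ℝ)
    (hx : (Finset.univ.filter fun i => x i ≠ 0).card ≤ s) :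
    (1 - mu1 A (s - 1)) * ∑ i, (x i) ^ 2 ≤ ∑ k, (A.mulVec x k) ^ 2 ∧
      ∑ k, (A.mulVec x k) ^ 2 ≤ (1 + mu1 A (s - 1)) * ∑ i, (x i) ^ 2 := by
  classical
  have hn : 0 < n := lt_of_lt_of_le hs1 hsn
  set G : Fin n → Fin n → ℝ := fun i j => ∑ k, A k i * A k j with hGdef
  have hGsymm : ∀ i j, |G i j| = |G j i| := by
    intro i j; simp only [hGdef]
    congr 1; exact Finset.sum_congr rfl fun k _ => mul_comm _ _
  set M := {t : ℝ | ∃ S : Finset (Fin n), S.card ≤ s - 1 ∧ ∃ i : Fin n, i ∉ S ∧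
    t = ∑ j ∈ S, |∑ k : Fin m, A k i * A k j|} with hMdef
  have hmu : mu1 A (s - 1) = sSup M := rfl
  set μ := mu1 A (s - 1) with hμdef
  have hbdd : BddAbove M := by
    refine ⟨∑ i, ∑ j, |G i j|, ?_⟩
    rintro t ⟨S, hS, i, hi, rfl⟩
    calc ∑ j ∈ S, |G i j|
        ≤ ∑ j, |G i j| := Finset.sum_le_sum_of_subset_of_nonneg (Finset.subset_univ S)
          (fun j _ _ => abs_nonneg _)
      _ ≤ ∑ i, ∑ j, |G i j| := Finset.single_le_sum
          (f := fun i => ∑ j, |G i j|)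
          (fun i _ => Finset.sum_nonneg fun j _ => abs_nonneg _) (Finset.mem_univ i)
  have hμ0 : 0 ≤ μ :=
    le_csSup hbdd ⟨∅, Nat.zero_le _, ⟨0, hn⟩, Finset.notMem_empty _, by simp⟩
  have key : ∀ (i : Fin n) (S : Finset (Fin n)), S.card ≤ s - 1 → i ∉ S →
      ∑ j ∈ S, |G i j| ≤ μ := by
    intro i S hS hi
    exact le_csSup hbdd ⟨S, hS, i, hi, rfl⟩
  -- expansion
  have expand : ∑ k, (A.mulVec x k)^2 = ∑ i, ∑ j, x i * x j * G i j := by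
    simp only [Matrix.mulVec, dotProduct, sq, Finset.sum_mul_sum, Finset.mul_sum, hGdef]
    rw [Finset.sum_comm]
    refine Finset.sum_congr rfl fun i _ => ?_
    rw [Finset.sum_comm]
    refine Finset.sum_congr rfl fun j _ => ?_
    rw [Finset.sum_mul]
    exact Finset.sum_congr rfl fun k _ => by ring
  set S := Finset.univ.filter (fun i => x i ≠ 0) with hSdef
  have hxS : ∀ i, i ∉ S → x i = 0 := by
    intro i hi
    by_contra h
    exact hi (Finset.mem_filter.mpr ⟨Finset.mem_univ i, h⟩)
  -- split diagonal
  have split : ∑ i, ∑ j, x i * x j * G i j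
      = (∑ i, (x i)^2) + ∑ i ∈ S, ∑ j ∈ S.erase i, x i * x j * G i j := by
    have h1 : ∀ i : Fin n, ∑ j, x i * x j * G i j
        = (x i)^2 + ∑ j ∈ Finset.univ.erase i, x i * x j * G i j := by
      intro i
      rw [← Finset.add_sum_erase _ _ (Finset.mem_univ i)]
      congr 1
      have : G i i = 1 := by
        rw [hGdef]; rw [← hA i]; exact Finset.sum_congr rfl fun k _ => (sq (A k i)).symm
      rw [this]; ring
    rw [Finset.sum_congr rfl fun i _ => h1 i, Finset.sum_add_distrib]
    congr 1
    rw [← Finset.sum_subset (Finset.subset_univ S) (fun i _ hi => by simp [hxS i hi])]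
    refine Finset.sum_congr rfl fun i hi => ?_
    refine (Finset.sum_subset (Finset.erase_subset_erase _ (Finset.subset_univ S)) ?_).symm
    intro j hj hjS
    rcases Finset.mem_erase.mp hj with ⟨hji, _⟩
    have : j ∉ S := fun hmem => hjS (Finset.mem_erase.mpr ⟨hji, hmem⟩)
    simp [hxS j this]
  set E := ∑ i ∈ S, ∑ j ∈ S.erase i, x i * x j * G i j with hEdef
  set N := ∑ i, (x i)^2 with hNdef
  have hNnonneg : 0 ≤ N := Finset.sum_nonneg fun i _ => sq_nonneg _
  -- key per-index bound
  have hinner : ∀ i ∈ S, ∑ j ∈ S.erase i, |G i j| ≤ μ := by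
    intro i hi
    refine key i (S.erase i) ?_ (Finset.notMem_erase i S)
    rw [Finset.card_erase_of_mem hi]
    exact Nat.sub_le_sub_right hx 1
  have habs : |E| ≤ μ * N := by
    have step1 : |E| ≤ ∑ i ∈ S, ∑ j ∈ S.erase i,
        ((x i)^2 / 2 + (x j)^2 / 2) * |G i j| := by
      calc |E| ≤ ∑ i ∈ S, |∑ j ∈ S.erase i, x i * x j * G i j| :=
            Finset.abs_sum_le_sum_abs _ _
        _ ≤ ∑ i ∈ S, ∑ j ∈ S.erase i, |x i * x j * G i j| :=
            Finset.sum_le_sum fun i _ => Finset.abs_sum_le_sum_abs _ _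
        _ ≤ _ := by
            refine Finset.sum_le_sum fun i _ => Finset.sum_le_sum fun j _ => ?_
            rw [abs_mul, abs_mul]
            have h1 : |x i| * |x j| ≤ (x i)^2 / 2 + (x j)^2 / 2 := by
              nlinarith [sq_nonneg (|x i| - |x j|), sq_abs (x i), sq_abs (x j)]
            exact mul_le_mul_of_nonneg_right h1 (abs_nonneg _)
    have step2 : ∑ i ∈ S, ∑ j ∈ S.erase i, ((x i)^2 / 2 + (x j)^2 / 2) * |G i j|
        = (∑ i ∈ S, ∑ j ∈ S.erase i, ((x i)^2 / 2) * |G i j|)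
          + ∑ i ∈ S, ∑ j ∈ S.erase i, ((x j)^2 / 2) * |G i j| := by
      rw [← Finset.sum_add_distrib]
      refine Finset.sum_congr rfl fun i _ => ?_
      rw [← Finset.sum_add_distrib]
      exact Finset.sum_congr rfl fun j _ => by ring
    have step3 : ∑ i ∈ S, ∑ j ∈ S.erase i, ((x j)^2 / 2) * |G i j|
        = ∑ i ∈ S, ∑ j ∈ S.erase i, ((x i)^2 / 2) * |G j i| := by
      exact swap_sum_erase S (fun i j => ((x j)^2 / 2) * |G i j|)
    have half : ∀ (f : Fin n → Fin n → ℝ), (∀ i ∈ S, ∑ j ∈ S.erase i, |f i j| ≤ μ) →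
        ∑ i ∈ S, ∑ j ∈ S.erase i, ((x i)^2 / 2) * |f i j| ≤ μ * N / 2 := by
      intro f hf
      calc ∑ i ∈ S, ∑ j ∈ S.erase i, ((x i)^2 / 2) * |f i j|
          = ∑ i ∈ S, ((x i)^2 / 2) * ∑ j ∈ S.erase i, |f i j| := by
            exact Finset.sum_congr rfl fun i _ => (Finset.mul_sum _ _ _).symm
        _ ≤ ∑ i ∈ S, ((x i)^2 / 2) * μ := Finset.sum_le_sum fun i hi =>
            mul_le_mul_of_nonneg_left (hf i hi) (by positivity)
        _ ≤ ∑ i, ((x i)^2 / 2) * μ := Finset.sum_le_sum_of_subset_of_nonneg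
            (Finset.subset_univ S) (fun i _ _ => by positivity)
        _ = μ * N / 2 := by rw [← Finset.sum_mul, ← Finset.sum_div]; ring
    have b1 := half (fun i j => G i j) (by
      intro i hi
      calc ∑ j ∈ S.erase i, |G i j| ≤ μ := hinner i hi)
    have b2 := half (fun i j => G j i) (by
      intro i hi
      calc ∑ j ∈ S.erase i, |G j i| = ∑ j ∈ S.erase i, |G i j| :=
            Finset.sum_congr rfl fun j _ => (hGsymm i j).symm
        _ ≤ μ := hinner i hi)
    calc |E| ≤ _ := step1
      _ = _ := step2
      _ ≤ μ * N / 2 + μ * N / 2 := by rw [step3]; exact add_le_add b1 b2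
      _ = μ * N := by ring
  rw [expand, split]
  rw [abs_le] at habs
  constructor <;> nlinarith [habs.1, habs.2]
end

section
/- Let A be an m×n real matrix whose columns A_1,…,A_n all have ℓ2-norm 1. If x ∈ ℝ^n is s-sparse and y ∈ ℝ^n is t-sparse (with 1 ≤ s, t and s+t−1 ≤ n−1), then |⟨Ax, Ay⟩ − ⟨x, y⟩| ≤ μ₁(A, s+t−1)·‖x‖₂·‖y‖₂. -/
open scoped Classical

set_option maxHeartbeats 1000000

/-- If `x` is `s`-sparse and `y` is `t`-sparse, then
`|⟨Ax, Ay⟩ − ⟨x, y⟩| ≤ μ₁(A, s+t−1) ‖x‖₂ ‖y‖₂`. -/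
theorem stmt1 {m n : ℕ} (A : Matrix (Fin m) (Fin n) ℝ)
    (hA : ∀ j, ∑ k, (A k j) ^ 2 = 1)
    (s t : ℕ) (hs : 1 ≤ s) (ht : 1 ≤ t) (hst : s + t - 1 ≤ n - 1)
    (x y : Fin n → ℝ)
    (hx : (Finset.univ.filter fun i => x i ≠ 0).card ≤ s)
    (hy : (Finset.univ.filter fun i => y i ≠ 0).card ≤ t) :
    |(∑ k, A.mulVec x k * A.mulVec y k) - ∑ i, x i * y i| ≤
      mu1 A (s + t - 1) * Real.sqrt (∑ i, (x i) ^ 2) * Real.sqrt (∑ i, (y i) ^ 2) := by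
  classical
  set G : Fin n → Fin n → ℝ := fun i j => ∑ k, A k i * A k j with hGdef
  have hn : 1 ≤ n := by
    by_contra h
    push_neg at h
    interval_cases n
    omega
  set μ := mu1 A (s + t - 1) with hμdef
  -- Cauchy–Schwarz bound on entries of the Gram matrix
  have hG1 : ∀ i j, |G i j| ≤ 1 := by
    intro i j
    have h := Finset.sum_mul_sq_le_sq_mul_sq Finset.univ (fun k => A k i) (fun k => A k j)
    rw [hA i, hA j] at h
    have : (G i j) ^ 2 ≤ 1 := by simpa [hGdef] using h
    nlinarith [abs_nonneg (G i j), sq_abs (G i j)]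
  have hGsymm : ∀ i j, G i j = G j i := by
    intro i j
    exact Finset.sum_congr rfl fun k _ => mul_comm _ _
  -- the set defining μ is bounded above
  have hBdd : BddAbove {r : ℝ | ∃ S : Finset (Fin n), S.card ≤ s + t - 1 ∧ ∃ i : Fin n, i ∉ S ∧
      r = ∑ j ∈ S, |∑ k : Fin m, A k i * A k j|} := by
    refine ⟨(s + t - 1 : ℕ), ?_⟩
    rintro r ⟨S, hS, i, hi, rfl⟩
    calc ∑ j ∈ S, |∑ k : Fin m, A k i * A k j| ≤ ∑ j ∈ S, 1 :=
          Finset.sum_le_sum fun j _ => hG1 i j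
      _ = (S.card : ℝ) := by simp
      _ ≤ ((s + t - 1 : ℕ) : ℝ) := by exact_mod_cast hS
  have hle : ∀ (S : Finset (Fin n)) (i : Fin n), S.card ≤ s + t - 1 → i ∉ S →
      ∑ j ∈ S, |G i j| ≤ μ := by
    intro S i hS hi
    exact le_csSup hBdd ⟨S, hS, i, hi, rfl⟩
  have hμ0 : 0 ≤ μ := by
    have := hle ∅ ⟨0, hn⟩ (by simp) (by simp)
    simpa using this
  -- rewrite the LHS
  have expand : (∑ k, A.mulVec x k * A.mulVec y k) = ∑ i, ∑ j, x i * y j * G i j := by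
    calc ∑ k, A.mulVec x k * A.mulVec y k
        = ∑ k, ∑ i, ∑ j, x i * y j * (A k i * A k j) := by
          refine Finset.sum_congr rfl fun k _ => ?_
          simp only [Matrix.mulVec, dotProduct, Finset.sum_mul_sum]
          exact Finset.sum_congr rfl fun i _ => Finset.sum_congr rfl fun j _ => by ring
      _ = ∑ i, ∑ k, ∑ j, x i * y j * (A k i * A k j) := Finset.sum_comm
      _ = ∑ i, ∑ j, ∑ k, x i * y j * (A k i * A k j) :=
          Finset.sum_congr rfl fun i _ => Finset.sum_comm
      _ = ∑ i, ∑ j, x i * y j * G i j := by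
          simp [hGdef, Finset.mul_sum]
  have hGii : ∀ i, G i i = 1 := by
    intro i
    have := hA i
    simpa [hGdef, pow_two] using this
  have key : (∑ k, A.mulVec x k * A.mulVec y k) - ∑ i, x i * y i
      = ∑ i, ∑ j ∈ Finset.univ.erase i, x i * y j * G i j := by
    rw [expand, ← Finset.sum_sub_distrib]
    refine Finset.sum_congr rfl fun i _ => ?_
    rw [← Finset.add_sum_erase _ _ (Finset.mem_univ i), hGii i]
    ring
  rw [key]
  -- degenerate cases
  by_cases hx0 : ∑ i, (x i) ^ 2 = 0
  · have hxz : ∀ i, x i = 0 := by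
      intro i
      have := (Finset.sum_eq_zero_iff_of_nonneg (fun i _ => sq_nonneg (x i))).mp hx0 i
        (Finset.mem_univ i)
      exact pow_eq_zero_iff (by norm_num) |>.mp this
    simp [hxz, hx0]
  by_cases hy0 : ∑ i, (y i) ^ 2 = 0
  · have hyz : ∀ i, y i = 0 := by
      intro i
      have := (Finset.sum_eq_zero_iff_of_nonneg (fun i _ => sq_nonneg (y i))).mp hy0 i
        (Finset.mem_univ i)
      exact pow_eq_zero_iff (by norm_num) |>.mp this
    simp [hyz, hy0]
  -- main case
  set S : Finset (Fin n) := Finset.univ.filter (fun i => x i ≠ 0) with hSdef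
  set T : Finset (Fin n) := Finset.univ.filter (fun i => y i ≠ 0) with hTdef
  set X : ℝ := Real.sqrt (∑ i, (x i) ^ 2) with hXdef
  set Y : ℝ := Real.sqrt (∑ i, (y i) ^ 2) with hYdef
  have hXsum : 0 ≤ ∑ i, (x i) ^ 2 := Finset.sum_nonneg fun i _ => sq_nonneg _
  have hYsum : 0 ≤ ∑ i, (y i) ^ 2 := Finset.sum_nonneg fun i _ => sq_nonneg _
  have hX0 : 0 < X := Real.sqrt_pos.mpr (lt_of_le_of_ne hXsum (Ne.symm hx0))
  have hY0 : 0 < Y := Real.sqrt_pos.mpr (lt_of_le_of_ne hYsum (Ne.symm hy0))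
  have hX2 : X ^ 2 = ∑ i, (x i) ^ 2 := Real.sq_sqrt hXsum
  have hY2 : Y ^ 2 = ∑ i, (y i) ^ 2 := Real.sq_sqrt hYsum
  set a : ℝ := Y / X with hadef
  have ha : 0 < a := div_pos hY0 hX0
  -- generic sum-swap lemma
  have swap : ∀ f : Fin n → Fin n → ℝ,
      ∑ i ∈ S, ∑ j ∈ T.erase i, f i j = ∑ j ∈ T, ∑ i ∈ S.erase j, f i j := by
    intro f
    have h1 : ∀ (W : Finset (Fin n)) (i : Fin n) (g : Fin n → ℝ),
        ∑ j ∈ W.erase i, g j = ∑ j ∈ W, if j ≠ i then g j else 0 := by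
      intro W i g
      rw [← Finset.sum_filter, Finset.filter_ne']
    calc ∑ i ∈ S, ∑ j ∈ T.erase i, f i j
        = ∑ i ∈ S, ∑ j ∈ T, if j ≠ i then f i j else 0 :=
          Finset.sum_congr rfl fun i _ => h1 T i _
      _ = ∑ j ∈ T, ∑ i ∈ S, if j ≠ i then f i j else 0 := Finset.sum_comm
      _ = ∑ j ∈ T, ∑ i ∈ S.erase j, f i j := by
          refine Finset.sum_congr rfl fun j _ => ?_
          rw [h1 S j (fun i => f i j)]
          exact Finset.sum_congr rfl fun i _ => by
            rcases eq_or_ne i j with h | h <;> simp [h, Ne.symm]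
  -- step 1: absolute values and restriction to the supports
  have step1 : |∑ i, ∑ j ∈ Finset.univ.erase i, x i * y j * G i j|
      ≤ ∑ i ∈ S, ∑ j ∈ T.erase i, |x i| * |y j| * |G i j| := by
    have restrict : ∑ i ∈ S, ∑ j ∈ T.erase i, |x i| * |y j| * |G i j|
        = ∑ i, ∑ j ∈ Finset.univ.erase i, |x i| * |y j| * |G i j| := by
      have inner : ∀ i : Fin n, ∑ j ∈ T.erase i, |x i| * |y j| * |G i j|
          = ∑ j ∈ Finset.univ.erase i, |x i| * |y j| * |G i j| := by
        intro i
        refine Finset.sum_subset (Finset.erase_subset_erase i (Finset.subset_univ T)) ?_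
        intro j hj hj'
        have hjne : j ≠ i := Finset.ne_of_mem_erase hj
        have : j ∉ T := fun hT => hj' (Finset.mem_erase.mpr ⟨hjne, hT⟩)
        have : y j = 0 := by
          by_contra hyj
          exact this (by simp [hTdef, hyj])
        simp [this]
      rw [Finset.sum_congr rfl fun i _ => inner i]
      refine Finset.sum_subset (Finset.subset_univ S) ?_
      intro i _ hi'
      have : x i = 0 := by
        by_contra hxi
        exact hi' (by simp [hSdef, hxi])
      simp [this]
    rw [restrict]
    calc |∑ i, ∑ j ∈ Finset.univ.erase i, x i * y j * G i j|
        ≤ ∑ i, |∑ j ∈ Finset.univ.erase i, x i * y j * G i j| :=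
          Finset.abs_sum_le_sum_abs _ _
      _ ≤ ∑ i, ∑ j ∈ Finset.univ.erase i, |x i * y j * G i j| :=
          Finset.sum_le_sum fun i _ => Finset.abs_sum_le_sum_abs _ _
      _ = ∑ i, ∑ j ∈ Finset.univ.erase i, |x i| * |y j| * |G i j| := by
          simp [abs_mul]
  -- step 2: AM-GM on each term
  have amgm : ∀ u v : ℝ, |u| * |v| ≤ (a * u ^ 2 + v ^ 2 / a) / 2 := by
    intro u v
    have h2 : 2 * a * (|u| * |v|) ≤ a ^ 2 * u ^ 2 + v ^ 2 := by
      nlinarith [sq_abs u, sq_abs v, sq_nonneg (a * |u| - |v|), ha.le]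
    have heq : (a * u ^ 2 + v ^ 2 / a) / 2 = (a ^ 2 * u ^ 2 + v ^ 2) / (2 * a) := by
      field_simp
    rw [heq, le_div_iff₀ (by positivity)]
    linarith
  have step2 : ∑ i ∈ S, ∑ j ∈ T.erase i, |x i| * |y j| * |G i j|
      ≤ ∑ i ∈ S, ∑ j ∈ T.erase i,
          ((a / 2) * (x i ^ 2 * |G i j|) + (1 / (2 * a)) * (y j ^ 2 * |G i j|)) := by
    refine Finset.sum_le_sum fun i _ => Finset.sum_le_sum fun j _ => ?_
    have h1 := amgm (x i) (y j)
    have habs : (0 : ℝ) ≤ |G i j| := abs_nonneg _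
    calc |x i| * |y j| * |G i j| = |G i j| * (|x i| * |y j|) := by ring
      _ ≤ |G i j| * ((a * x i ^ 2 + y j ^ 2 / a) / 2) :=
          mul_le_mul_of_nonneg_left h1 habs
      _ = (a / 2) * (x i ^ 2 * |G i j|) + (1 / (2 * a)) * (y j ^ 2 * |G i j|) := by
          field_simp
  -- step 3: bound the two halves by μ
  have row : ∀ i : Fin n, ∑ j ∈ T.erase i, |G i j| ≤ μ := by
    intro i
    refine hle (T.erase i) i ?_ (Finset.notMem_erase i T)
    calc (T.erase i).card ≤ T.card := Finset.card_erase_le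
      _ ≤ t := hy
      _ ≤ s + t - 1 := by omega
  have col : ∀ j : Fin n, ∑ i ∈ S.erase j, |G i j| ≤ μ := by
    intro j
    have : ∑ i ∈ S.erase j, |G i j| = ∑ i ∈ S.erase j, |G j i| := by
      refine Finset.sum_congr rfl fun i _ => by rw [hGsymm]
    rw [this]
    refine hle (S.erase j) j ?_ (Finset.notMem_erase j S)
    calc (S.erase j).card ≤ S.card := Finset.card_erase_le
      _ ≤ s := hx
      _ ≤ s + t - 1 := by omega
  have part1 : ∑ i ∈ S, ∑ j ∈ T.erase i, x i ^ 2 * |G i j| ≤ μ * ∑ i, (x i) ^ 2 := by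
    calc ∑ i ∈ S, ∑ j ∈ T.erase i, x i ^ 2 * |G i j|
        = ∑ i ∈ S, x i ^ 2 * ∑ j ∈ T.erase i, |G i j| := by
          simp [Finset.mul_sum]
      _ ≤ ∑ i ∈ S, x i ^ 2 * μ :=
          Finset.sum_le_sum fun i _ => mul_le_mul_of_nonneg_left (row i) (sq_nonneg _)
      _ = μ * ∑ i ∈ S, x i ^ 2 := by rw [Finset.mul_sum]; exact Finset.sum_congr rfl fun i _ => mul_comm _ _
      _ ≤ μ * ∑ i, (x i) ^ 2 := by
          refine mul_le_mul_of_nonneg_left ?_ hμ0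
          exact Finset.sum_le_sum_of_subset_of_nonneg (Finset.subset_univ S)
            (fun i _ _ => sq_nonneg _)
  have part2 : ∑ i ∈ S, ∑ j ∈ T.erase i, y j ^ 2 * |G i j| ≤ μ * ∑ i, (y i) ^ 2 := by
    rw [swap (fun i j => y j ^ 2 * |G i j|)]
    calc ∑ j ∈ T, ∑ i ∈ S.erase j, y j ^ 2 * |G i j|
        = ∑ j ∈ T, y j ^ 2 * ∑ i ∈ S.erase j, |G i j| := by
          simp [Finset.mul_sum]
      _ ≤ ∑ j ∈ T, y j ^ 2 * μ :=
          Finset.sum_le_sum fun j _ => mul_le_mul_of_nonneg_left (col j) (sq_nonneg _)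
      _ = μ * ∑ j ∈ T, y j ^ 2 := by rw [Finset.mul_sum]; exact Finset.sum_congr rfl fun j _ => mul_comm _ _
      _ ≤ μ * ∑ i, (y i) ^ 2 := by
          refine mul_le_mul_of_nonneg_left ?_ hμ0
          exact Finset.sum_le_sum_of_subset_of_nonneg (Finset.subset_univ T)
            (fun j _ _ => sq_nonneg _)
  -- put everything together
  have split : ∑ i ∈ S, ∑ j ∈ T.erase i,
      ((a / 2) * (x i ^ 2 * |G i j|) + (1 / (2 * a)) * (y j ^ 2 * |G i j|))
      = (a / 2) * (∑ i ∈ S, ∑ j ∈ T.erase i, x i ^ 2 * |G i j|)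
        + (1 / (2 * a)) * (∑ i ∈ S, ∑ j ∈ T.erase i, y j ^ 2 * |G i j|) := by
    simp [Finset.sum_add_distrib, Finset.mul_sum]
  have final : (a / 2) * (μ * ∑ i, (x i) ^ 2) + (1 / (2 * a)) * (μ * ∑ i, (y i) ^ 2)
      = μ * X * Y := by
    rw [← hX2, ← hY2, hadef]
    field_simp
    ring
  calc |∑ i, ∑ j ∈ Finset.univ.erase i, x i * y j * G i j|
      ≤ ∑ i ∈ S, ∑ j ∈ T.erase i, |x i| * |y j| * |G i j| := step1
    _ ≤ ∑ i ∈ S, ∑ j ∈ T.erase i,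
          ((a / 2) * (x i ^ 2 * |G i j|) + (1 / (2 * a)) * (y j ^ 2 * |G i j|)) := step2
    _ = (a / 2) * (∑ i ∈ S, ∑ j ∈ T.erase i, x i ^ 2 * |G i j|)
        + (1 / (2 * a)) * (∑ i ∈ S, ∑ j ∈ T.erase i, y j ^ 2 * |G i j|) := split
    _ ≤ (a / 2) * (μ * ∑ i, (x i) ^ 2) + (1 / (2 * a)) * (μ * ∑ i, (y i) ^ 2) := by
        have h1 : 0 ≤ a / 2 := by positivity
        have h2 : 0 ≤ 1 / (2 * a) := by positivity
        exact add_le_add (mul_le_mul_of_nonneg_left part1 h1)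
          (mul_le_mul_of_nonneg_left part2 h2)
    _ = μ * X * Y := final
end

section
/- Let A be an m×n real matrix whose columns A_1,…,A_n all have ℓ2-norm 1. If x ∈ ℝ^n is s-sparse, y ∈ ℝ^n is t-sparse, and the supports of x and y are disjoint, then |⟨Ax, Ay⟩| ≤ μ₁(A, s+t−1)·‖x‖₂·‖y‖₂. -/
open scoped Classical

lemma mu1_bdd {m n : ℕ} (A : Matrix (Fin m) (Fin n) ℝ) (s : ℕ) :
    BddAbove {t : ℝ | ∃ S : Finset (Fin n), S.card ≤ s ∧ ∃ i : Fin n, i ∉ S ∧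
      t = ∑ j ∈ S, |∑ k : Fin m, A k i * A k j|} := by
  apply Set.Finite.bddAbove
  apply Set.Finite.subset (Set.finite_range
    (fun p : Finset (Fin n) × Fin n => ∑ j ∈ p.1, |∑ k : Fin m, A k p.2 * A k j|))
  rintro r ⟨S, _, i, _, rfl⟩
  exact ⟨(S, i), rfl⟩

lemma mu1_ge {m n : ℕ} (A : Matrix (Fin m) (Fin n) ℝ) (s : ℕ)
    {S : Finset (Fin n)} (hS : S.card ≤ s) {i : Fin n} (hi : i ∉ S) :
    ∑ j ∈ S, |∑ k : Fin m, A k i * A k j| ≤ mu1 A s :=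
  le_csSup (mu1_bdd A s) ⟨S, hS, i, hi, rfl⟩

lemma mu1_nonneg {m n : ℕ} (A : Matrix (Fin m) (Fin n) ℝ) (s : ℕ) : 0 ≤ mu1 A s := by
  rcases Nat.eq_zero_or_pos n with h | h
  · have : {t : ℝ | ∃ S : Finset (Fin n), S.card ≤ s ∧ ∃ i : Fin n, i ∉ S ∧
        t = ∑ j ∈ S, |∑ k : Fin m, A k i * A k j|} = ∅ := by
      ext r
      simp only [Set.mem_setOf_eq, Set.mem_empty_iff_false, iff_false]
      rintro ⟨S, _, i, _⟩
      exact absurd i.2 (by omega)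
    rw [mu1, this, Real.sSup_empty]
  · have i : Fin n := ⟨0, h⟩
    have := mu1_ge A s (S := (∅ : Finset (Fin n))) (by simp) (i := i) (by simp)
    simpa using this

/-- Abstract Schur-type bound via AM-GM. -/
lemma double_bound {n : ℕ} (S T : Finset (Fin n)) (g : Fin n → Fin n → ℝ)
    (u v : Fin n → ℝ) (μ X Y : ℝ)
    (hX : 0 < X) (hY : 0 < Y) (hμ0 : 0 ≤ μ)
    (hrow : ∀ i ∈ S, ∑ j ∈ T, g i j ≤ μ)
    (hcol : ∀ j ∈ T, ∑ i ∈ S, g i j ≤ μ)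
    (hg : ∀ i j, 0 ≤ g i j)
    (hu : ∑ i ∈ S, u i ^ 2 ≤ X ^ 2) (hv : ∑ j ∈ T, v j ^ 2 ≤ Y ^ 2) :
    ∑ i ∈ S, ∑ j ∈ T, |u i| * |v j| * g i j ≤ μ * X * Y := by
  have amgm : ∀ a b : ℝ, |a| * |b| ≤ Y / (2 * X) * a ^ 2 + X / (2 * Y) * b ^ 2 := by
    intro a b
    rw [div_mul_eq_mul_div, div_mul_eq_mul_div, div_add_div _ _ (by positivity) (by positivity),
      le_div_iff₀ (by positivity)]
    nlinarith [sq_nonneg (Y * |a| - X * |b|), sq_abs a, sq_abs b, mul_pos hX hY]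
  calc ∑ i ∈ S, ∑ j ∈ T, |u i| * |v j| * g i j
      ≤ ∑ i ∈ S, ∑ j ∈ T, (Y / (2 * X) * u i ^ 2 * g i j + X / (2 * Y) * v j ^ 2 * g i j) := by
        refine Finset.sum_le_sum fun i _ => Finset.sum_le_sum fun j _ => ?_
        calc |u i| * |v j| * g i j
            ≤ (Y / (2 * X) * u i ^ 2 + X / (2 * Y) * v j ^ 2) * g i j :=
              mul_le_mul_of_nonneg_right (amgm (u i) (v j)) (hg i j)
          _ = _ := by ring
    _ = (∑ i ∈ S, ∑ j ∈ T, Y / (2 * X) * u i ^ 2 * g i j)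
        + ∑ i ∈ S, ∑ j ∈ T, X / (2 * Y) * v j ^ 2 * g i j := by
        simp [Finset.sum_add_distrib]
    _ = (∑ i ∈ S, Y / (2 * X) * u i ^ 2 * ∑ j ∈ T, g i j)
        + ∑ j ∈ T, X / (2 * Y) * v j ^ 2 * ∑ i ∈ S, g i j := by
        congr 1
        · exact Finset.sum_congr rfl fun i _ => (Finset.mul_sum _ _ _).symm
        · rw [Finset.sum_comm]
          exact Finset.sum_congr rfl fun j _ => (Finset.mul_sum _ _ _).symm
    _ ≤ (∑ i ∈ S, Y / (2 * X) * u i ^ 2 * μ) + ∑ j ∈ T, X / (2 * Y) * v j ^ 2 * μ := by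
        gcongr with i hi j hj
        · exact hrow i hi
        · exact hcol j hj
    _ = Y / (2 * X) * (∑ i ∈ S, u i ^ 2) * μ + X / (2 * Y) * (∑ j ∈ T, v j ^ 2) * μ := by
        rw [← Finset.sum_mul, ← Finset.sum_mul, ← Finset.mul_sum, ← Finset.mul_sum]
    _ ≤ Y / (2 * X) * X ^ 2 * μ + X / (2 * Y) * Y ^ 2 * μ := by gcongr
    _ = μ * X * Y := by field_simp; ring

/-- If `x` is `s`-sparse, `y` is `t`-sparse, and the supports of `x` and `y` are disjoint,
then `|⟨Ax, Ay⟩| ≤ μ₁(A, s+t−1) ‖x‖₂ ‖y‖₂`. -/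
theorem stmt2 {m n : ℕ} (A : Matrix (Fin m) (Fin n) ℝ)
    (hA : ∀ j, ∑ k, (A k j) ^ 2 = 1)
    (s t : ℕ)
    (x y : Fin n → ℝ)
    (hx : (Finset.univ.filter fun i => x i ≠ 0).card ≤ s)
    (hy : (Finset.univ.filter fun i => y i ≠ 0).card ≤ t)
    (hdisj : ∀ i, x i = 0 ∨ y i = 0) :
    |∑ k, A.mulVec x k * A.mulVec y k| ≤
      mu1 A (s + t - 1) * Real.sqrt (∑ i, (x i) ^ 2) * Real.sqrt (∑ i, (y i) ^ 2) := by
  classical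
  set S : Finset (Fin n) := Finset.univ.filter fun i => x i ≠ 0 with hSdef
  set T : Finset (Fin n) := Finset.univ.filter fun i => y i ≠ 0 with hTdef
  have hxS : ∀ i, i ∉ S → x i = 0 := by
    intro i hi; by_contra h; exact hi (by simp [hSdef, h])
  have hyT : ∀ j, j ∉ T → y j = 0 := by
    intro j hj; by_contra h; exact hj (by simp [hTdef, h])
  have hST : ∀ i ∈ S, i ∉ T := by
    intro i hi
    rcases hdisj i with h | h
    · exact absurd h (by simpa [hSdef] using hi)
    · simp [hTdef, h]
  set g : Fin n → Fin n → ℝ := fun i j => |∑ k, A k i * A k j| with hgdef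
  set μ := mu1 A (s + t - 1) with hμdef
  have hμ0 : 0 ≤ μ := mu1_nonneg A _
  -- rewrite the inner product
  have key : (∑ k, A.mulVec x k * A.mulVec y k)
      = ∑ i ∈ S, ∑ j ∈ T, x i * y j * ∑ k, A k i * A k j := by
    have e1 : (∑ k, A.mulVec x k * A.mulVec y k)
        = ∑ i, ∑ j, x i * y j * ∑ k, A k i * A k j := by
      simp only [Matrix.mulVec, dotProduct]
      calc ∑ k, (∑ i, A k i * x i) * (∑ j, A k j * y j)
          = ∑ k : Fin m, ∑ i, ∑ j, (A k i * x i) * (A k j * y j) := by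
            refine Finset.sum_congr rfl fun k _ => ?_
            rw [Finset.sum_mul_sum]
        _ = ∑ i, ∑ j, ∑ k, (A k i * x i) * (A k j * y j) := by
            rw [Finset.sum_comm]
            exact Finset.sum_congr rfl fun i _ => Finset.sum_comm
        _ = ∑ i, ∑ j, x i * y j * ∑ k, A k i * A k j := by
            refine Finset.sum_congr rfl fun i _ => Finset.sum_congr rfl fun j _ => ?_
            rw [Finset.mul_sum]
            exact Finset.sum_congr rfl fun k _ => by ring
    rw [e1]
    rw [← Finset.sum_subset (Finset.subset_univ S) (by
      intro i _ hi
      simp [hxS i hi])]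
    refine Finset.sum_congr rfl fun i _ => ?_
    rw [← Finset.sum_subset (Finset.subset_univ T) (by
      intro j _ hj
      simp [hyT j hj])]
  rw [key]
  -- bounds on rows and columns
  have hrow : ∀ i ∈ S, ∑ j ∈ T, g i j ≤ μ := by
    intro i hi
    apply mu1_ge
    · have h1 : 1 ≤ S.card := Finset.card_pos.mpr ⟨i, hi⟩
      have h2 : T.card ≤ t := hy
      omega
    · exact hST i hi
  have hcol : ∀ j ∈ T, ∑ i ∈ S, g i j ≤ μ := by
    intro j hj
    have h1 : 1 ≤ T.card := Finset.card_pos.mpr ⟨j, hj⟩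
    have hScard : S.card ≤ s := hx
    have hjS : j ∉ S := fun hjS => hST j hjS hj
    have hb := mu1_ge A (s + t - 1) (S := S) (by omega) (i := j) hjS
    calc ∑ i ∈ S, g i j
        = ∑ i ∈ S, |∑ k, A k j * A k i| := by
          refine Finset.sum_congr rfl fun i _ => ?_
          simp only [hgdef]
          congr 1
          exact Finset.sum_congr rfl fun k _ => by ring
      _ ≤ μ := hb
  -- abs bound
  have habs : |∑ i ∈ S, ∑ j ∈ T, x i * y j * ∑ k, A k i * A k j|
      ≤ ∑ i ∈ S, ∑ j ∈ T, |x i| * |y j| * g i j := by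
    refine (Finset.abs_sum_le_sum_abs _ _).trans (Finset.sum_le_sum fun i _ => ?_)
    refine (Finset.abs_sum_le_sum_abs _ _).trans (Finset.sum_le_sum fun j _ => ?_)
    rw [abs_mul, abs_mul]
  -- trivial cases
  by_cases hx0 : ∀ i, x i = 0
  · have hSe : S = ∅ := by ext i; simp [hSdef, hx0 i]
    rw [hSe]
    simp only [Finset.sum_empty, abs_zero]
    positivity
  by_cases hy0 : ∀ i, y i = 0
  · have hTe : T = ∅ := by ext j; simp [hTdef, hy0 j]
    rw [hTe]
    simp only [Finset.sum_empty, Finset.sum_const_zero, abs_zero]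
    positivity
  push_neg at hx0 hy0
  obtain ⟨i₀, hi₀⟩ := hx0
  obtain ⟨j₀, hj₀⟩ := hy0
  have hsx : (0:ℝ) < ∑ i, x i ^ 2 :=
    Finset.sum_pos' (fun i _ => sq_nonneg _) ⟨i₀, Finset.mem_univ _, by positivity⟩
  have hsy : (0:ℝ) < ∑ i, y i ^ 2 :=
    Finset.sum_pos' (fun i _ => sq_nonneg _) ⟨j₀, Finset.mem_univ _, by positivity⟩
  have hX : 0 < Real.sqrt (∑ i, x i ^ 2) := Real.sqrt_pos.mpr hsx
  have hY : 0 < Real.sqrt (∑ i, y i ^ 2) := Real.sqrt_pos.mpr hsy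
  refine habs.trans (double_bound S T g x y μ _ _ hX hY hμ0 hrow hcol
    (fun i j => abs_nonneg _) ?_ ?_)
  · rw [Real.sq_sqrt hsx.le]
    exact Finset.sum_le_sum_of_subset_of_nonneg (Finset.subset_univ S)
      (fun i _ _ => sq_nonneg _)
  · rw [Real.sq_sqrt hsy.le]
    exact Finset.sum_le_sum_of_subset_of_nonneg (Finset.subset_univ T)
      (fun j _ _ => sq_nonneg _)
end

section
/- Let x, x̂ ∈ ℝ^n satisfy ‖x̂‖₁ ≤ ‖x‖₁ (as holds when x̂ minimizes the ℓ1-norm over a feasible set containing x), let s ∈ {1,…,n}, and set h = x̂ − x. Then ‖h_{−max(s)}‖₁ ≤ ‖h_{max(s)}‖₁ + 2‖x_{−max(s)}‖₁. -/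
open scoped Classical

lemma key_sum_le {n : ℕ} (f : Fin n → ℝ) (hf : ∀ i, 0 ≤ f i)
    (A B : Finset (Fin n)) (hcard : A.card = B.card)
    (hmax : ∀ i ∈ B, ∀ j ∉ B, f j ≤ f i) :
    ∑ j ∈ A, f j ≤ ∑ j ∈ B, f j := by
  have hA : ∑ j ∈ A, f j = ∑ j ∈ A ∩ B, f j + ∑ j ∈ A \ B, f j := by
    rw [Finset.sum_inter_add_sum_sdiff]
  have hB : ∑ j ∈ B, f j = ∑ j ∈ A ∩ B, f j + ∑ j ∈ B \ A, f j := by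
    rw [Finset.inter_comm, Finset.sum_inter_add_sum_sdiff]
  rw [hA, hB]
  gcongr ?_ + ?_
  · exact le_refl _
  have hc : (A \ B).card = (B \ A).card := by
    have h1 := Finset.card_inter_add_card_sdiff A B
    have h2 := Finset.card_inter_add_card_sdiff B A
    rw [Finset.inter_comm B A] at h2
    omega
  have e := Finset.equivOfCardEq hc
  calc ∑ j ∈ A \ B, f j = ∑ j ∈ (A \ B).attach, f j.1 := (Finset.sum_attach _ _).symm
    _ ≤ ∑ j ∈ (A \ B).attach, f (e j).1 := by
        apply Finset.sum_le_sum
        intro j _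
        have hj : (j : Fin n) ∉ B := (Finset.mem_sdiff.mp j.2).2
        have hi : ((e j : {x // x ∈ B \ A}) : Fin n) ∈ B := (Finset.mem_sdiff.mp (e j).2).1
        exact hmax _ hi _ hj
    _ = ∑ i ∈ (B \ A).attach, f i.1 := Finset.sum_equiv e (by simp) (by simp)
    _ = ∑ j ∈ B \ A, f j := Finset.sum_attach _ _

/-- Cone constraint inequality: if `‖x̂‖₁ ≤ ‖x‖₁` and `h = x̂ − x`, then
`‖h_{−max(s)}‖₁ ≤ ‖h_{max(s)}‖₁ + 2‖x_{−max(s)}‖₁`.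
Here `Sh` (resp. `Sx`) is any set of indices of the `s` largest-magnitude entries of `h`
(resp. of `x`). -/
theorem stmt6 {n : ℕ} (x xh : Fin n → ℝ)
    (hmin : ∑ i, |xh i| ≤ ∑ i, |x i|)
    (s : ℕ) (hs1 : 1 ≤ s) (hsn : s ≤ n)
    (Sh : Finset (Fin n)) (hShcard : Sh.card = s)
    (hShmax : ∀ i ∈ Sh, ∀ j ∉ Sh, |xh j - x j| ≤ |xh i - x i|)
    (Sx : Finset (Fin n)) (hSxcard : Sx.card = s)
    (hSxmax : ∀ i ∈ Sx, ∀ j ∉ Sx, |x j| ≤ |x i|) :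
    ∑ j ∈ Shᶜ, |xh j - x j| ≤ (∑ j ∈ Sh, |xh j - x j|) + 2 * ∑ j ∈ Sxᶜ, |x j| := by
  set f : Fin n → ℝ := fun i => |xh i - x i| with hf
  have hf0 : ∀ i, 0 ≤ f i := fun i => abs_nonneg _
  -- Step 1: ∑_{Sxᶜ} f ≤ ∑_{Sx} f + 2 ∑_{Sxᶜ} |x|
  have step1 : ∑ j ∈ Sxᶜ, f j ≤ ∑ j ∈ Sx, f j + 2 * ∑ j ∈ Sxᶜ, |x j| := by
    have hsplit : ∀ g : Fin n → ℝ, ∑ i, g i = ∑ j ∈ Sx, g j + ∑ j ∈ Sxᶜ, g j := by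
      intro g
      rw [Finset.sum_add_sum_compl]
    have h1 : ∀ j ∈ Sx, |x j| - f j ≤ |xh j| := by
      intro j _
      have := abs_sub_abs_le_abs_sub (x j) (xh j)
      have h2 : |x j - xh j| = f j := by rw [hf]; rw [abs_sub_comm]
      linarith
    have h2 : ∀ j ∈ Sxᶜ, f j - |x j| ≤ |xh j| := by
      intro j _
      have := abs_sub_abs_le_abs_sub (xh j - x j) (- x j)
      simp only [abs_neg, sub_neg_eq_add, sub_add_cancel] at this
      linarith [this]
    have hchain : (∑ j ∈ Sx, (|x j| - f j)) + (∑ j ∈ Sxᶜ, (f j - |x j|)) ≤ ∑ i, |x i| := by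
      calc (∑ j ∈ Sx, (|x j| - f j)) + (∑ j ∈ Sxᶜ, (f j - |x j|))
          ≤ (∑ j ∈ Sx, |xh j|) + ∑ j ∈ Sxᶜ, |xh j| :=
            add_le_add (Finset.sum_le_sum h1) (Finset.sum_le_sum h2)
        _ = ∑ i, |xh i| := (hsplit _).symm
        _ ≤ ∑ i, |x i| := hmin
    have hx : ∑ i, |x i| = ∑ j ∈ Sx, |x j| + ∑ j ∈ Sxᶜ, |x j| := hsplit _
    rw [Finset.sum_sub_distrib, Finset.sum_sub_distrib] at hchain
    linarith
  -- Step 2: ∑_{Sx} f ≤ ∑_{Sh} f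
  have step2 : ∑ j ∈ Sx, f j ≤ ∑ j ∈ Sh, f j :=
    key_sum_le f hf0 Sx Sh (by rw [hSxcard, hShcard]) hShmax
  -- Step 3: ∑_{Shᶜ} f ≤ ∑_{Sxᶜ} f
  have step3 : ∑ j ∈ Shᶜ, f j ≤ ∑ j ∈ Sxᶜ, f j := by
    have hT1 : ∑ j ∈ Sh, f j + ∑ j ∈ Shᶜ, f j = ∑ i, f i := Finset.sum_add_sum_compl _ _
    have hT2 : ∑ j ∈ Sx, f j + ∑ j ∈ Sxᶜ, f j = ∑ i, f i := Finset.sum_add_sum_compl _ _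
    linarith
  linarith
end

section
/- Suppose n ≥ s ≥ 1, c₁ ≥ c₂ ≥ ⋯ ≥ c_n ≥ 0 are real numbers, ρ ≥ 0, and Σ_{j=1}^s c_j + ρ ≥ Σ_{j=s+1}^n c_j. Then for every real β ≥ 1, Σ_{j=s+1}^n c_j^β ≤ s·( ( (Σ_{j=1}^s c_j^β)/s )^{1/β} + ρ/s )^β. -/
/-- If `c₁ ≥ c₂ ≥ ⋯ ≥ c_n ≥ 0`, `ρ ≥ 0` and `∑_{j=1}^s c_j + ρ ≥ ∑_{j=s+1}^n c_j`, then for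
every real `β ≥ 1`,
`∑_{j=s+1}^n c_j^β ≤ s ((∑_{j=1}^s c_j^β / s)^{1/β} + ρ/s)^β`. -/
theorem stmt8 (n s : ℕ) (hs : 1 ≤ s) (hsn : s ≤ n) (c : ℕ → ℝ)
    (hmono : ∀ j, 1 ≤ j → j + 1 ≤ n → c (j + 1) ≤ c j)
    (hnonneg : ∀ j, 1 ≤ j → j ≤ n → 0 ≤ c j)
    (ρ : ℝ) (hρ : 0 ≤ ρ)
    (hsum : ∑ j ∈ Finset.Icc (s + 1) n, c j ≤ (∑ j ∈ Finset.Icc 1 s, c j) + ρ)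
    (β : ℝ) (hβ : 1 ≤ β) :
    ∑ j ∈ Finset.Icc (s + 1) n, c j ^ β ≤
      (s : ℝ) * (((∑ j ∈ Finset.Icc 1 s, c j ^ β) / s) ^ (1 / β) + ρ / s) ^ β := by
  have hβ0 : (0:ℝ) < β := lt_of_lt_of_le one_pos hβ
  have hs0 : (0:ℝ) < s := by exact_mod_cast hs
  have hanti : ∀ i j, 1 ≤ i → i ≤ j → j ≤ n → c j ≤ c i := by
    intro i j hi hij
    induction j, hij using Nat.le_induction with
    | base => intro _; exact le_refl _
    | succ j hj ih =>
      intro hjn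
      exact le_trans (hmono j (le_trans hi hj) hjn)
        (ih (le_trans (Nat.le_succ j) hjn))
  set A := ∑ j ∈ Finset.Icc 1 s, c j with hA
  set P := (∑ j ∈ Finset.Icc 1 s, c j ^ β) / s with hPdef
  have hP0 : 0 ≤ P := by
    apply div_nonneg _ hs0.le
    exact Finset.sum_nonneg fun j hj => by
      rw [Finset.mem_Icc] at hj
      exact Real.rpow_nonneg (hnonneg j hj.1 (le_trans hj.2 hsn)) β
  set M := P ^ (1/β) + ρ / s with hM
  have hPr0 : 0 ≤ P ^ (1/β) := Real.rpow_nonneg hP0 _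
  have hM0 : 0 ≤ M := add_nonneg hPr0 (div_nonneg hρ hs0.le)
  -- power mean: A / s ≤ P ^ (1/β)
  have hAM : A / s ≤ P ^ (1/β) := by
    have h := Real.arith_mean_le_rpow_mean (Finset.Icc 1 s) (fun _ => (s:ℝ)⁻¹) c
      (fun i _ => by positivity)
      (by
        rw [Finset.sum_const, Nat.card_Icc]
        simp only [Nat.add_sub_cancel, nsmul_eq_mul]
        field_simp)
      (fun i hi => by
        rw [Finset.mem_Icc] at hi
        exact hnonneg i hi.1 (le_trans hi.2 hsn)) hβ
    have e1 : A / (s:ℝ) = ∑ i ∈ Finset.Icc 1 s, (s:ℝ)⁻¹ * c i := by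
      rw [hA, div_eq_inv_mul, Finset.mul_sum]
    have e2 : P = ∑ i ∈ Finset.Icc 1 s, (s:ℝ)⁻¹ * c i ^ β := by
      rw [hPdef, div_eq_inv_mul, Finset.mul_sum]
    rw [e1, e2]
    exact h
  rcases Nat.lt_or_ge s n with hlt | hge
  swap
  · -- s = n, empty sum
    have he : Finset.Icc (s+1) n = ∅ := by
      apply Finset.Icc_eq_empty
      omega
    rw [he, Finset.sum_empty]
    have : 0 ≤ M ^ β := Real.rpow_nonneg hM0 _
    positivity
  -- main case
  have hsn1 : s + 1 ≤ n := hlt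
  have hc1 : 0 ≤ c (s+1) := hnonneg _ (by omega) hsn1
  -- c (s+1) ^ β ≤ P
  have hcP : c (s+1) ^ β ≤ P := by
    rw [hPdef, le_div_iff₀ hs0]
    calc c (s+1) ^ β * s = ∑ j ∈ Finset.Icc 1 s, c (s+1) ^ β := by
          rw [Finset.sum_const, Nat.card_Icc]
          simp only [Nat.add_sub_cancel, nsmul_eq_mul]
          ring
      _ ≤ ∑ j ∈ Finset.Icc 1 s, c j ^ β := by
          apply Finset.sum_le_sum
          intro j hj
          rw [Finset.mem_Icc] at hj
          exact Real.rpow_le_rpow hc1 (hanti j (s+1) hj.1 (by omega) hsn1) hβ0.le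
  have hcM : c (s+1) ≤ M := by
    have h1 : (c (s+1) ^ β) ^ β⁻¹ ≤ P ^ β⁻¹ :=
      Real.rpow_le_rpow (Real.rpow_nonneg hc1 _) hcP (by positivity)
    rw [Real.rpow_rpow_inv hc1 hβ0.ne'] at h1
    rw [hM, one_div]
    have h2 : 0 ≤ ρ / (s:ℝ) := div_nonneg hρ hs0.le
    linarith
  have hβsub : β - 1 + 1 ≠ 0 := by
    rw [sub_add_cancel]; exact hβ0.ne'
  have hBn : ∀ j ∈ Finset.Icc (s+1) n, c j ^ β ≤ M ^ (β - 1) * c j := by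
    intro j hj
    rw [Finset.mem_Icc] at hj
    have hcj0 : 0 ≤ c j := hnonneg j (by omega) hj.2
    have hcj : c j ≤ M := le_trans (hanti (s+1) j (by omega) hj.1 hj.2) hcM
    calc c j ^ β = c j ^ (β - 1 + 1) := by rw [sub_add_cancel]
      _ = c j ^ (β - 1) * c j ^ (1:ℝ) := Real.rpow_add' hcj0 hβsub
      _ = c j ^ (β - 1) * c j := by rw [Real.rpow_one]
      _ ≤ M ^ (β - 1) * c j := by
          apply mul_le_mul_of_nonneg_right _ hcj0
          exact Real.rpow_le_rpow hcj0 hcj (by linarith)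
  have hMM : M ^ (β - 1) * M = M ^ β := by
    nth_rewrite 2 [← Real.rpow_one M]
    rw [← Real.rpow_add' hM0 hβsub, sub_add_cancel]
  clear_value A P M
  calc ∑ j ∈ Finset.Icc (s+1) n, c j ^ β
      ≤ ∑ j ∈ Finset.Icc (s+1) n, M ^ (β - 1) * c j := Finset.sum_le_sum hBn
    _ = M ^ (β - 1) * ∑ j ∈ Finset.Icc (s+1) n, c j := by rw [Finset.mul_sum]
    _ ≤ M ^ (β - 1) * (A + ρ) := by
        apply mul_le_mul_of_nonneg_left hsum (Real.rpow_nonneg hM0 _)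
    _ ≤ M ^ (β - 1) * (s * M) := by
        apply mul_le_mul_of_nonneg_left _ (Real.rpow_nonneg hM0 _)
        have h2 : A ≤ P ^ (1/β) * s := (div_le_iff₀ hs0).mp hAM
        have h3 : (s:ℝ) * M = P ^ (1/β) * s + ρ := by
          rw [hM]; field_simp
        linarith
    _ = s * M ^ β := by rw [← hMM]; ring
end

section
/- Let A ∈ ℝ^{m×n}, x ∈ ℝ^n, λ > 0, and b = Ax + z with ‖Aᵀz‖_∞ ≤ λ/2. Let x̂ be a minimizer of y ↦ λ‖y‖₁ + (1/2)‖Ay − b‖₂² (the Lasso), and set h = x̂ − x. Then for every s ∈ {1,…,n}: ‖Ah‖₂² + λ‖h_{−max(s)}‖₁ ≤ 3λ‖h_{max(s)}‖₁ + 4λ‖x_{−max(s)}‖₁. -/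
open scoped Classical
open Matrix

/-- If `S` contains the largest-magnitude entries of `f` and `T` has the same cardinality,
then the sum of `f` over `T` is at most that over `S`. -/
lemma sum_le_max_set {n : ℕ} (f : Fin n → ℝ) (hf : ∀ i, 0 ≤ f i)
    (S T : Finset (Fin n)) (hcard : T.card = S.card)
    (hmax : ∀ i ∈ S, ∀ j ∉ S, f j ≤ f i) :
    ∑ j ∈ T, f j ≤ ∑ j ∈ S, f j := by
  have h1 : ∑ j ∈ T, f j = ∑ j ∈ T ∩ S, f j + ∑ j ∈ T \ S, f j := by
    rw [Finset.sum_inter_add_sum_sdiff]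
  have h2 : ∑ j ∈ S, f j = ∑ j ∈ T ∩ S, f j + ∑ j ∈ S \ T, f j := by
    rw [Finset.inter_comm, Finset.sum_inter_add_sum_sdiff]
  have hcard' : (T \ S).card = (S \ T).card := by
    have h1 := Finset.card_sdiff_add_card_inter T S
    have h2 := Finset.card_sdiff_add_card_inter S T
    have h3 : (T ∩ S).card = (S ∩ T).card := by rw [Finset.inter_comm]
    omega
  have key : ∑ j ∈ T \ S, f j ≤ ∑ j ∈ S \ T, f j := by
    rcases Finset.eq_empty_or_nonempty (S \ T) with he | hne
    · have : (T \ S).card = 0 := by rw [hcard', he]; simp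
      rw [Finset.card_eq_zero] at this
      rw [this, he]
    · obtain ⟨i₀, hi₀, hmin⟩ := Finset.exists_min_image (S \ T) f hne
      have hb1 : ∑ j ∈ T \ S, f j ≤ (T \ S).card • f i₀ := by
        apply Finset.sum_le_card_nsmul
        intro j hj
        exact hmax i₀ (Finset.mem_sdiff.mp hi₀).1 j (Finset.mem_sdiff.mp hj).2
      have hb2 : (S \ T).card • f i₀ ≤ ∑ j ∈ S \ T, f j :=
        Finset.card_nsmul_le_sum _ _ _ (fun j hj => hmin j hj)
      calc ∑ j ∈ T \ S, f j ≤ (T \ S).card • f i₀ := hb1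
        _ = (S \ T).card • f i₀ := by rw [hcard']
        _ ≤ ∑ j ∈ S \ T, f j := hb2
  linarith

/-- Modified cone constraint inequality for the Lasso: if `‖Aᵀz‖_∞ ≤ λ/2` and `x̂` minimizes
`y ↦ λ‖y‖₁ + ½‖Ay − b‖₂²`, then with `h = x̂ − x`,
`‖Ah‖₂² + λ‖h_{−max(s)}‖₁ ≤ 3λ‖h_{max(s)}‖₁ + 4λ‖x_{−max(s)}‖₁`.
Here `Sh` (resp. `Sx`) is any set of indices of the `s` largest-magnitude entries of `h`
(resp. of `x`). -/
theorem stmt10 {m n : ℕ} (A : Matrix (Fin m) (Fin n) ℝ)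
    (lam : ℝ) (hlam : 0 < lam)
    (x : Fin n → ℝ) (z : Fin m → ℝ) (b : Fin m → ℝ)
    (hb : b = A.mulVec x + z)
    (hz : ∀ i, |A.transpose.mulVec z i| ≤ lam / 2)
    (xh : Fin n → ℝ)
    (hmin : ∀ y : Fin n → ℝ,
      lam * (∑ i, |xh i|) + (1 / 2) * ∑ k, (A.mulVec xh k - b k) ^ 2 ≤
        lam * (∑ i, |y i|) + (1 / 2) * ∑ k, (A.mulVec y k - b k) ^ 2)
    (s : ℕ) (hs1 : 1 ≤ s) (hsn : s ≤ n)
    (Sh : Finset (Fin n)) (hShcard : Sh.card = s)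
    (hShmax : ∀ i ∈ Sh, ∀ j ∉ Sh, |xh j - x j| ≤ |xh i - x i|)
    (Sx : Finset (Fin n)) (hSxcard : Sx.card = s)
    (hSxmax : ∀ i ∈ Sx, ∀ j ∉ Sx, |x j| ≤ |x i|) :
    (∑ k, (A.mulVec (xh - x) k) ^ 2) + lam * ∑ j ∈ Shᶜ, |xh j - x j| ≤
      3 * lam * (∑ j ∈ Sh, |xh j - x j|) + 4 * lam * ∑ j ∈ Sxᶜ, |x j| := by
  set h : Fin n → ℝ := xh - x with hh
  have hhj : ∀ j, h j = xh j - x j := fun j => rfl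
  -- residual identities
  have hAh : A.mulVec h = A.mulVec xh - A.mulVec x := Matrix.mulVec_sub A xh x
  have hres : ∀ k, A.mulVec xh k - b k = A.mulVec h k - z k := by
    intro k
    rw [hb, hAh]
    simp [Pi.sub_apply, Pi.add_apply]
    ring
  have hres0 : ∀ k, A.mulVec x k - b k = -z k := by
    intro k; rw [hb]; simp
  -- dot product swap
  have swap : ∑ k, A.mulVec h k * z k = ∑ j, h j * A.transpose.mulVec z j := by
    have : A.mulVec h ⬝ᵥ z = h ⬝ᵥ A.transpose.mulVec z := by
      rw [Matrix.mulVec_transpose, dotProduct_comm, Matrix.dotProduct_mulVec,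
        dotProduct_comm]
    simpa [dotProduct] using this
  -- bound on the cross term
  have cross : ∑ k, A.mulVec h k * z k ≤ ∑ j, |h j| * (lam / 2) := by
    rw [swap]
    apply Finset.sum_le_sum
    intro j _
    calc h j * A.transpose.mulVec z j ≤ |h j * A.transpose.mulVec z j| := le_abs_self _
      _ = |h j| * |A.transpose.mulVec z j| := abs_mul _ _
      _ ≤ |h j| * (lam / 2) := mul_le_mul_of_nonneg_left (hz j) (abs_nonneg _)
  -- expand the quadratic in the minimality inequality
  have expand : ∑ k, (A.mulVec xh k - b k) ^ 2 =
      ∑ k, (A.mulVec h k) ^ 2 - 2 * ∑ k, A.mulVec h k * z k + ∑ k, z k ^ 2 := by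
    have : ∀ k, (A.mulVec xh k - b k) ^ 2 =
        (A.mulVec h k) ^ 2 - 2 * (A.mulVec h k * z k) + z k ^ 2 := by
      intro k; rw [hres k]; ring
    rw [Finset.sum_congr rfl (fun k _ => this k)]
    rw [Finset.sum_add_distrib, Finset.sum_sub_distrib, Finset.mul_sum]
  have expand0 : ∑ k, (A.mulVec x k - b k) ^ 2 = ∑ k, z k ^ 2 := by
    apply Finset.sum_congr rfl; intro k _; rw [hres0 k]; ring
  have hminx := hmin x
  rw [expand, expand0] at hminx
  -- key inequality: ‖Ah‖² ≤ 2λ(‖x‖₁ − ‖x̂‖₁) + λ‖h‖₁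
  have key : ∑ k, (A.mulVec h k) ^ 2 ≤
      2 * lam * (∑ i, |x i| - ∑ i, |xh i|) + lam * ∑ j, |h j| := by
    have e : ∑ j, |h j| * (lam / 2) = (lam / 2) * ∑ j, |h j| := by
      rw [Finset.mul_sum]; apply Finset.sum_congr rfl; intros; ring
    rw [e] at cross
    nlinarith [cross, hminx]
  -- split total sums over Sx / Sxᶜ and over Sh / Shᶜ
  have splitSx : ∀ g : Fin n → ℝ, ∑ i, g i = ∑ j ∈ Sx, g j + ∑ j ∈ Sxᶜ, g j :=
    fun g => (Finset.sum_add_sum_compl Sx g).symm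
  have splitSh : ∀ g : Fin n → ℝ, ∑ i, g i = ∑ j ∈ Sh, g j + ∑ j ∈ Shᶜ, g j :=
    fun g => (Finset.sum_add_sum_compl Sh g).symm
  -- termwise bounds on ‖x‖₁ − ‖x̂‖₁
  have bnd1 : ∑ j ∈ Sx, (|x j| - |xh j|) ≤ ∑ j ∈ Sx, |h j| := by
    apply Finset.sum_le_sum; intro j _
    calc |x j| - |xh j| ≤ |x j - xh j| := abs_sub_abs_le_abs_sub _ _
      _ = |h j| := by rw [abs_sub_comm]; rfl
  have bnd2 : ∑ j ∈ Sxᶜ, (|x j| - |xh j|) ≤ ∑ j ∈ Sxᶜ, (2 * |x j| - |h j|) := by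
    apply Finset.sum_le_sum; intro j _
    have : |h j| ≤ |xh j| + |x j| := by rw [hhj]; exact abs_sub _ _
    linarith
  have diffsplit : ∑ i, |x i| - ∑ i, |xh i| = ∑ j ∈ Sx, (|x j| - |xh j|) +
      ∑ j ∈ Sxᶜ, (|x j| - |xh j|) := by
    rw [splitSx (fun i => |x i|), splitSx (fun i => |xh i|),
      Finset.sum_sub_distrib, Finset.sum_sub_distrib]
    ring
  have sum2 : ∑ j ∈ Sxᶜ, (2 * |x j| - |h j|) =
      2 * ∑ j ∈ Sxᶜ, |x j| - ∑ j ∈ Sxᶜ, |h j| := by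
    rw [Finset.sum_sub_distrib, Finset.mul_sum]
  -- maximality of Sh
  have hmaxset : ∑ j ∈ Sx, |h j| ≤ ∑ j ∈ Sh, |h j| := by
    apply sum_le_max_set (fun j => |h j|) (fun j => abs_nonneg _) Sh Sx
      (by rw [hShcard, hSxcard])
    intro i hi j hj
    simpa [hhj] using hShmax i hi j hj
  have htotal : ∑ j ∈ Sx, |h j| + ∑ j ∈ Sxᶜ, |h j| =
      ∑ j ∈ Sh, |h j| + ∑ j ∈ Shᶜ, |h j| := by
    rw [← splitSx (fun j => |h j|), ← splitSh (fun j => |h j|)]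
  have hsplitH : ∑ j, |h j| = ∑ j ∈ Sx, |h j| + ∑ j ∈ Sxᶜ, |h j| :=
    splitSx (fun j => |h j|)
  -- finish
  have goal' : (∑ k, (A.mulVec h k) ^ 2) + lam * ∑ j ∈ Shᶜ, |h j| ≤
      3 * lam * (∑ j ∈ Sh, |h j|) + 4 * lam * ∑ j ∈ Sxᶜ, |x j| := by
    nlinarith [key, bnd1, bnd2, diffsplit, sum2, hmaxset, htotal, hsplitH, hlam,
      mul_le_mul_of_nonneg_left hmaxset (le_of_lt hlam)]
  simpa [hhj] using goal'
end

section
/- Let A be an m×n real matrix (n ≥ 2) whose columns have ℓ2-norm 1, let s ∈ {1,…,n} with 2s−1 ≤ n−1 satisfy μ₁(A, s−1) + μ₁(A, 2s−1) < 1, let σ > 0, and set λ = σ√(2 log n) and η* = (3/2)σ√(2 log n). Let x ∈ ℝ^n be s-sparse and b = Ax + z with ‖Aᵀz‖_∞ ≤ λ. Let x̂ be a minimizer of ‖y‖₁ over all y ∈ ℝ^n with ‖Aᵀ(b − Ay)‖_∞ ≤ η*. Then ‖x̂ − x‖₂² ≤ [72(5 + log n) / (1 − μ₁(A,s−1) −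 μ₁(A,2s−1))²]·Σ_{j=1}^n max{σ², x(j)²}. -/
open scoped Classical

namespace Stmt12Aux

lemma mu1_bdd {m n : ℕ} (A : Matrix (Fin m) (Fin n) ℝ) (s : ℕ) :
    BddAbove {t : ℝ | ∃ S : Finset (Fin n), S.card ≤ s ∧ ∃ i : Fin n, i ∉ S ∧
      t = ∑ j ∈ S, |∑ k : Fin m, A k i * A k j|} := by
  apply Set.Finite.bddAbove
  apply Set.Finite.subset
    (Set.finite_range fun p : Finset (Fin n) × Fin n => ∑ j ∈ p.1, |∑ k : Fin m, A k p.2 * A k j|)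
  rintro t ⟨S, -, i, -, rfl⟩
  exact ⟨(S, i), rfl⟩

lemma rowsum_le {m n : ℕ} (A : Matrix (Fin m) (Fin n) ℝ) (k : ℕ) (U : Finset (Fin n)) (i : Fin n)
    (hiU : i ∉ U) (hcard : U.card ≤ k) :
    ∑ j ∈ U, |∑ t : Fin m, A t i * A t j| ≤ mu1 A k :=
  le_csSup (mu1_bdd A k) ⟨U, hcard, i, hiU, rfl⟩

lemma mu1_mem_zero {m n : ℕ} (A : Matrix (Fin m) (Fin n) ℝ) (s : ℕ) (hn : 0 < n) :
    (0:ℝ) ∈ {t : ℝ | ∃ S : Finset (Fin n), S.card ≤ s ∧ ∃ i : Fin n, i ∉ S ∧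
      t = ∑ j ∈ S, |∑ k : Fin m, A k i * A k j|} :=
  ⟨∅, by simp, ⟨0, hn⟩, Finset.notMem_empty _, by simp⟩

lemma mu1_nonneg {m n : ℕ} (A : Matrix (Fin m) (Fin n) ℝ) (s : ℕ) (hn : 0 < n) :
    0 ≤ mu1 A s :=
  le_csSup (mu1_bdd A s) (mu1_mem_zero A s hn)

lemma mu1_mono {m n : ℕ} (A : Matrix (Fin m) (Fin n) ℝ) {k l : ℕ} (hkl : k ≤ l) (hn : 0 < n) :
    mu1 A k ≤ mu1 A l := by
  apply csSup_le_csSup (mu1_bdd A l) ⟨0, mu1_mem_zero A k hn⟩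
  rintro t ⟨S, hcard, i, hiS, rfl⟩
  exact ⟨S, hcard.trans hkl, i, hiS, rfl⟩

lemma mu1_add_le {m n : ℕ} (A : Matrix (Fin m) (Fin n) ℝ) (p q : ℕ) (hn : 0 < n) :
    mu1 A (p + q) ≤ mu1 A p + mu1 A q := by
  apply csSup_le ⟨0, mu1_mem_zero A (p+q) hn⟩
  rintro t ⟨S, hcard, i, hiS, rfl⟩
  by_cases h : S.card ≤ p
  · have h1 := rowsum_le A p S i hiS h
    have h2 := mu1_nonneg A q hn
    linarith
  · push_neg at h
    obtain ⟨S₁, hsub, hc⟩ := Finset.exists_subset_card_eq h.le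
    have hsplit : ∑ j ∈ S \ S₁, |∑ k : Fin m, A k i * A k j| + ∑ j ∈ S₁, |∑ k : Fin m, A k i * A k j|
        = ∑ j ∈ S, |∑ k : Fin m, A k i * A k j| := Finset.sum_sdiff hsub
    have hcard2 : (S \ S₁).card ≤ q := by
      have := Finset.card_sdiff_of_subset hsub
      omega
    have h1 := rowsum_le A p S₁ i (fun hmem => hiS (hsub hmem)) hc.le
    have h2 := rowsum_le A q (S \ S₁) i (fun hmem => hiS (Finset.mem_sdiff.mp hmem).1) hcard2
    linarith

lemma exists_top_subset {ι : Type*} [DecidableEq ι] (w : ι → ℝ) (C : Finset ι) (k : ℕ)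
    (hk : k ≤ C.card) :
    ∃ U, U ⊆ C ∧ U.card = k ∧ (∀ i ∈ U, ∀ j ∈ C, j ∉ U → w j ≤ w i) ∧
      (∀ V ⊆ C, V.card = k → ∑ j ∈ V, w j ≤ ∑ j ∈ U, w j) := by
  obtain ⟨U0, hU0sub, hU0card⟩ := Finset.exists_subset_card_eq hk
  have hne : (C.powersetCard k).Nonempty :=
    ⟨U0, Finset.mem_powersetCard.mpr ⟨hU0sub, hU0card⟩⟩
  obtain ⟨U, hUmem, hUmax⟩ := Finset.exists_max_image (C.powersetCard k)
    (fun V => ∑ j ∈ V, w j) hne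
  obtain ⟨hUsub, hUcard⟩ := Finset.mem_powersetCard.mp hUmem
  refine ⟨U, hUsub, hUcard, ?_, ?_⟩
  · intro i hi j hjC hjU
    by_contra hlt
    push_neg at hlt
    have hjU' : j ∉ U.erase i := fun h => hjU (Finset.mem_of_mem_erase h)
    have hk1 : 1 ≤ k := by
      rw [← hUcard]; exact Finset.card_pos.mpr ⟨i, hi⟩
    have hcard' : (insert j (U.erase i)).card = k := by
      rw [Finset.card_insert_of_notMem hjU', Finset.card_erase_of_mem hi, hUcard]
      omega
    have hsub' : insert j (U.erase i) ⊆ C := by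
      intro y hy
      rcases Finset.mem_insert.mp hy with rfl | hy
      · exact hjC
      · exact hUsub (Finset.mem_of_mem_erase hy)
    have hsum : ∑ y ∈ U, w y < ∑ y ∈ insert j (U.erase i), w y := by
      rw [Finset.sum_insert hjU']
      have h1 : ∑ y ∈ U.erase i, w y + w i = ∑ y ∈ U, w y := Finset.sum_erase_add U w hi
      linarith
    exact absurd (hUmax _ (Finset.mem_powersetCard.mpr ⟨hsub', hcard'⟩)) (not_le.mpr hsum)
  · intro V hV hVcard
    exact hUmax V (Finset.mem_powersetCard.mpr ⟨hV, hVcard⟩)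

lemma blk {ι : Type*} [DecidableEq ι] (g w : ι → ℝ) (hg : ∀ j, 0 ≤ g j) (hw : ∀ j, 0 ≤ w j)
    (r : ℕ) (hr : 1 ≤ r) (μ : ℝ) (hμ : 0 ≤ μ) (C : Finset ι)
    (hcoh : ∀ U ⊆ C, U.card ≤ r → ∑ j ∈ U, g j ≤ μ) :
    ∀ β : ℝ, 0 ≤ β → (∀ j ∈ C, w j ≤ β) →
    ∑ j ∈ C, g j * w j ≤ μ * β + μ * (∑ j ∈ C, w j) / r := by
  induction C using Finset.strongInduction with
  | _ C ih =>
    intro β hβ hcap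
    have hrR : (0:ℝ) < r := by exact_mod_cast hr
    have hsumw : 0 ≤ ∑ j ∈ C, w j := Finset.sum_nonneg fun j _ => hw j
    by_cases hC : C.card ≤ r
    · have h1 : ∑ j ∈ C, g j * w j ≤ ∑ j ∈ C, g j * β :=
        Finset.sum_le_sum fun j hj => mul_le_mul_of_nonneg_left (hcap j hj) (hg j)
      have h2 : ∑ j ∈ C, g j * β = (∑ j ∈ C, g j) * β := by rw [Finset.sum_mul]
      have h3 : (∑ j ∈ C, g j) * β ≤ μ * β :=
        mul_le_mul_of_nonneg_right (hcoh C (le_refl _) hC) hβ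
      have h4 : 0 ≤ μ * (∑ j ∈ C, w j) / r := by positivity
      linarith
    · push_neg at hC
      obtain ⟨U, hUsub, hUcard, hUtop, -⟩ := exists_top_subset w C r hC.le
      have hUne : U.Nonempty := Finset.card_pos.mp (by omega)
      have hss : C \ U ⊂ C := Finset.sdiff_ssubset hUsub hUne
      set β' := (∑ j ∈ U, w j) / r with hβ'def
      have hβ'0 : 0 ≤ β' := by
        apply div_nonneg (Finset.sum_nonneg fun j _ => hw j) hrR.le
      have hcap' : ∀ j ∈ C \ U, w j ≤ β' := by
        intro j hj
        have hjC := (Finset.mem_sdiff.mp hj).1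
        have hjU := (Finset.mem_sdiff.mp hj).2
        have h1 : ∀ i ∈ U, w j ≤ w i := fun i hi => hUtop i hi j hjC hjU
        have h2 : (r:ℝ) * w j ≤ ∑ i ∈ U, w i := by
          calc (r:ℝ) * w j = ∑ _i ∈ U, w j := by
                rw [Finset.sum_const, hUcard, nsmul_eq_mul]
            _ ≤ ∑ i ∈ U, w i := Finset.sum_le_sum fun i hi => h1 i hi
        rw [hβ'def, le_div_iff₀ hrR]
        linarith
      have hcoh' : ∀ V ⊆ C \ U, V.card ≤ r → ∑ j ∈ V, g j ≤ μ := fun V hV hVc =>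
        hcoh V (hV.trans (Finset.sdiff_subset)) hVc
      have IH := ih (C \ U) hss hcoh' β' hβ'0 hcap'
      have hUgw : ∑ j ∈ U, g j * w j ≤ μ * β := by
        have h1 : ∑ j ∈ U, g j * w j ≤ ∑ j ∈ U, g j * β :=
          Finset.sum_le_sum fun j hj => mul_le_mul_of_nonneg_left (hcap j (hUsub hj)) (hg j)
        have h2 : (∑ j ∈ U, g j) * β ≤ μ * β :=
          mul_le_mul_of_nonneg_right (hcoh U hUsub hUcard.le) hβ
        rw [Finset.sum_mul] at h2
        linarith
      have hsplit : ∑ j ∈ C \ U, g j * w j + ∑ j ∈ U, g j * w j = ∑ j ∈ C, g j * w j :=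
        Finset.sum_sdiff hUsub
      have hsplitw : ∑ j ∈ C \ U, w j + ∑ j ∈ U, w j = ∑ j ∈ C, w j :=
        Finset.sum_sdiff hUsub
      have hfin : μ * β' + μ * (∑ j ∈ C \ U, w j) / r = μ * (∑ j ∈ C, w j) / r := by
        rw [hβ'def]
        field_simp
        rw [← hsplitw]
        ring
      linarith

lemma double_erase_swap {ι : Type*} [DecidableEq ι] (S T : Finset ι) (F : ι → ι → ℝ) :
    ∑ i ∈ S, ∑ j ∈ T.erase i, F i j = ∑ j ∈ T, ∑ i ∈ S.erase j, F i j := by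
  have key : ∀ (X Y : Finset ι) (G : ι → ι → ℝ), ∑ i ∈ X, ∑ j ∈ Y.erase i, G i j
      = (∑ i ∈ X, ∑ j ∈ Y, G i j) - ∑ i ∈ X ∩ Y, G i i := by
    intro X Y G
    have h1 : ∀ i ∈ X, ∑ j ∈ Y.erase i, G i j
        = ∑ j ∈ Y, G i j - (if i ∈ Y then G i i else 0) := by
      intro i _
      by_cases h : i ∈ Y
      · rw [Finset.sum_erase_eq_sub h, if_pos h]
      · rw [Finset.erase_eq_of_notMem h, if_neg h, sub_zero]
    rw [Finset.sum_congr rfl h1, Finset.sum_sub_distrib, Finset.sum_ite_mem]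
  rw [key S T F]
  have h2 : ∑ j ∈ T, ∑ i ∈ S.erase j, F i j
      = (∑ j ∈ T, ∑ i ∈ S, F i j) - ∑ j ∈ T ∩ S, F j j := key T S (fun j i => F i j)
  rw [h2, Finset.sum_comm, Finset.inter_comm]

end Stmt12Aux

set_option maxHeartbeats 2000000

open Stmt12Aux

/-- Oracle inequality for the Dantzig selector under the cumulative coherence condition
`μ₁(s−1) + μ₁(2s−1) < 1` (deterministic form, on the event
`‖Aᵀz‖_∞ ≤ σ√(2 log n)`), with `η* = (3/2)σ√(2 log n)`. -/
theorem stmt12 {m n : ℕ} (hn : 2 ≤ n) (A : Matrix (Fin m) (Fin n) ℝ)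
    (hA : ∀ j, ∑ k, (A k j) ^ 2 = 1)
    (s : ℕ) (hs1 : 1 ≤ s) (hsn : 2 * s - 1 ≤ n - 1)
    (hcond : mu1 A (s - 1) + mu1 A (2 * s - 1) < 1)
    (σ : ℝ) (hσ : 0 < σ)
    (x : Fin n → ℝ)
    (hx : (Finset.univ.filter fun i => x i ≠ 0).card ≤ s)
    (z : Fin m → ℝ) (b : Fin m → ℝ)
    (hb : b = A.mulVec x + z)
    (hz : ∀ i, |A.transpose.mulVec z i| ≤ σ * Real.sqrt (2 * Real.log n))
    (xh : Fin n → ℝ)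
    (hfeas : ∀ i, |A.transpose.mulVec (b - A.mulVec xh) i| ≤
      3 / 2 * (σ * Real.sqrt (2 * Real.log n)))
    (hmin : ∀ y : Fin n → ℝ,
      (∀ i, |A.transpose.mulVec (b - A.mulVec y) i| ≤
        3 / 2 * (σ * Real.sqrt (2 * Real.log n))) →
      ∑ i, |xh i| ≤ ∑ i, |y i|) :
    ∑ i, (xh i - x i) ^ 2 ≤
      72 * (5 + Real.log n) / (1 - mu1 A (s - 1) - mu1 A (2 * s - 1)) ^ 2 *
        ∑ j, max (σ ^ 2) ((x j) ^ 2) := by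
  have hn0 : 0 < n := by omega
  have hn1 : (1:ℝ) < (n:ℝ) := by exact_mod_cast hn
  have hlog : 0 < Real.log n := Real.log_pos hn1
  set lam := σ * Real.sqrt (2 * Real.log n) with hlamdef
  clear_value lam
  have hlam0 : 0 < lam := by
    rw [hlamdef]
    apply mul_pos hσ
    apply Real.sqrt_pos.mpr
    positivity
  have hlamsq : lam ^ 2 = 2 * Real.log n * σ ^ 2 := by
    rw [hlamdef, mul_pow, Real.sq_sqrt (by positivity)]
    ring
  set ε := (5/2 : ℝ) * lam with hεdef
  clear_value ε
  have hε0 : 0 < ε := by rw [hεdef]; positivity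
  set μ' := mu1 A (s-1) with hμ'def
  clear_value μ'
  set μ := mu1 A (2*s-1) with hμdef
  clear_value μ
  set D := 1 - μ' - μ with hDdef
  clear_value D
  have hD0 : 0 < D := by simp only [hDdef]; linarith only [hcond]
  have hμ'0 : 0 ≤ μ' := by rw [hμ'def]; exact mu1_nonneg A _ hn0
  have hμ0 : 0 ≤ μ := by rw [hμdef]; exact mu1_nonneg A _ hn0
  have hμ'μ : μ' ≤ μ := by rw [hμ'def, hμdef]; exact mu1_mono A (by omega) hn0
  have hD1 : D ≤ 1 := by simp only [hDdef]; linarith only [hμ'0, hμ0]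
  set v : Fin n → ℝ := fun j => xh j - x j with hvdef
  clear_value v
  set G : Fin n → Fin n → ℝ := fun i j => ∑ k : Fin m, A k i * A k j with hGdef
  clear_value G
  have hGsym : ∀ i j, G i j = G j i := by
    intro i j
    simp only [hGdef]
    apply Finset.sum_congr rfl
    intro k _
    ring
  have hGdiag : ∀ i, G i i = 1 := by
    intro i
    simp only [hGdef]
    rw [← hA i]
    apply Finset.sum_congr rfl
    intro k _
    ring
  have hrow : ∀ (kk : ℕ) (U : Finset (Fin n)) (i : Fin n), i ∉ U → U.card ≤ kk →
      ∑ j ∈ U, |G i j| ≤ mu1 A kk := by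
    intro kk U i hiU hc
    simp only [hGdef]
    exact rowsum_le A kk U i hiU hc
  -- K1 : gradient bound
  have K1 : ∀ i, |∑ j, G i j * v j| ≤ ε := by
    intro i
    have hident : (∑ j, G i j * v j)
        = A.transpose.mulVec z i - A.transpose.mulVec (b - A.mulVec xh) i := by
      simp only [hGdef, hvdef]
      subst hb
      simp only [Matrix.mulVec, dotProduct, Matrix.transpose_apply, Pi.sub_apply,
        Pi.add_apply]
      calc (∑ j, (∑ k, A k i * A k j) * (xh j - x j))
          = ∑ j, ∑ k, A k i * A k j * (xh j - x j) := by
            simp [Finset.sum_mul]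
        _ = ∑ k, ∑ j, A k i * A k j * (xh j - x j) := Finset.sum_comm
        _ = ∑ k : Fin m, (A k i * z k
              - A k i * ((∑ j, A k j * x j) + z k - ∑ j, A k j * xh j)) := by
            apply Finset.sum_congr rfl
            intro k _
            rw [mul_sub, mul_add, Finset.mul_sum, Finset.mul_sum]
            rw [show ∀ p q c d : ℝ, p - (q + c - d) = (d - q) + (p - c) by intros; ring]
            rw [← Finset.sum_sub_distrib, sub_self, add_zero]
            apply Finset.sum_congr rfl
            intro j _
            ring
        _ = _ := by rw [Finset.sum_sub_distrib]
    rw [hident]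
    calc |A.transpose.mulVec z i - A.transpose.mulVec (b - A.mulVec xh) i|
        ≤ |A.transpose.mulVec z i| + |A.transpose.mulVec (b - A.mulVec xh) i| := abs_sub _ _
      _ ≤ lam + 3/2 * lam := by
          have h1 := hz i
          have h2 := hfeas i
          linarith only [h1, h2]
      _ = ε := by rw [hεdef]; ring
  -- support set
  set S : Finset (Fin n) := Finset.univ.filter (fun i => x i ≠ 0) with hSdef
  clear_value S
  have hxS : ∀ j, j ∉ S → x j = 0 := by
    intro j hj
    by_contra hne
    exact hj (by simp [hSdef, hne])
  have hScard : S.card ≤ s := hx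
  set a := ∑ j ∈ S, |v j| with hadef
  clear_value a
  have ha0 : 0 ≤ a := by
    rw [hadef]; exact Finset.sum_nonneg fun j _ => abs_nonneg _
  -- x is feasible
  have hxfeas : ∀ i, |A.transpose.mulVec (b - A.mulVec x) i| ≤ 3 / 2 * lam := by
    intro i
    have hzeq : b - A.mulVec x = z := by
      rw [hb]; funext k; simp
    rw [hzeq]
    have := hz i
    linarith only [this, hlam0]
  have hl1 : ∑ i, |xh i| ≤ ∑ i, |x i| := hmin x hxfeas
  -- cone condition
  have hcone : ∑ j ∈ Sᶜ, |v j| ≤ a := by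
    have e1 : ∑ j ∈ S, |xh j| + ∑ j ∈ Sᶜ, |xh j| = ∑ j, |xh j| :=
      Finset.sum_add_sum_compl S _
    have e2 : ∑ j ∈ S, |x j| + ∑ j ∈ Sᶜ, |x j| = ∑ j, |x j| :=
      Finset.sum_add_sum_compl S _
    have e3 : ∑ j ∈ Sᶜ, |x j| = 0 := by
      apply Finset.sum_eq_zero
      intro j hj
      rw [hxS j (by simpa using hj)]
      simp
    have e4 : ∀ j ∈ Sᶜ, |xh j| = |v j| := by
      intro j hj
      have := hxS j (by simpa using hj)
      simp [hvdef, this]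
    have e5 : ∑ j ∈ Sᶜ, |xh j| = ∑ j ∈ Sᶜ, |v j| := Finset.sum_congr rfl e4
    have e6 : ∀ j ∈ S, |x j| - |v j| ≤ |xh j| := by
      intro j _
      have h7 : |x j| ≤ |xh j| + |v j| := by
        have : x j = xh j - v j := by simp [hvdef]
        rw [this]
        exact abs_sub _ _
      linarith
    have e7 : ∑ j ∈ S, (|x j| - |v j|) ≤ ∑ j ∈ S, |xh j| := Finset.sum_le_sum e6
    rw [Finset.sum_sub_distrib] at e7
    linarith only [hl1, e1, e2, e3, e5, e7, hadef.le, hadef.ge]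
  -- coordinate identity bound
  have habs : ∀ i : Fin n, |v i| ≤ |∑ j, G i j * v j| + ∑ j ∈ Finset.univ.erase i, |G i j| * |v j| := by
    intro i
    have hid : v i = (∑ j, G i j * v j) - ∑ j ∈ Finset.univ.erase i, G i j * v j := by
      have h1 : ∑ j ∈ Finset.univ.erase i, G i j * v j + G i i * v i = ∑ j, G i j * v j :=
        Finset.sum_erase_add _ _ (Finset.mem_univ i)
      rw [hGdiag i] at h1
      linarith
    calc |v i| = |(∑ j, G i j * v j) - ∑ j ∈ Finset.univ.erase i, G i j * v j| := by rw [← hid]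
      _ ≤ |∑ j, G i j * v j| + |∑ j ∈ Finset.univ.erase i, G i j * v j| := abs_sub _ _
      _ ≤ |∑ j, G i j * v j| + ∑ j ∈ Finset.univ.erase i, |G i j| * |v j| := by
          have := Finset.abs_sum_le_sum_abs (fun j => G i j * v j) (Finset.univ.erase i)
          simp only [abs_mul] at this
          linarith only [this]
  -- ℓ1 bound : D * a ≤ s * ε
  have hP3 : D * a ≤ (s:ℝ) * ε := by
    have step2 : a ≤ ∑ i ∈ S, |∑ j, G i j * v j|
        + ∑ i ∈ S, ∑ j ∈ Finset.univ.erase i, |G i j| * |v j| := by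
      rw [hadef, ← Finset.sum_add_distrib]
      exact Finset.sum_le_sum fun i _ => habs i
    have step3 : ∑ i ∈ S, |∑ j, G i j * v j| ≤ (s:ℝ) * ε := by
      calc ∑ i ∈ S, |∑ j, G i j * v j| ≤ ∑ _i ∈ S, ε := Finset.sum_le_sum fun i _ => K1 i
        _ = (S.card : ℝ) * ε := by rw [Finset.sum_const, nsmul_eq_mul]
        _ ≤ (s:ℝ) * ε := by
            apply mul_le_mul_of_nonneg_right _ hε0.le
            exact_mod_cast hScard
    have step4 : ∑ i ∈ S, ∑ j ∈ Finset.univ.erase i, |G i j| * |v j|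
        = ∑ j, ∑ i ∈ S.erase j, |G i j| * |v j| := by
      have := double_erase_swap S Finset.univ (fun i j => |G i j| * |v j|)
      rw [this]
    have step5 : ∀ j : Fin n, ∑ i ∈ S.erase j, |G i j| = ∑ i ∈ S.erase j, |G j i| := by
      intro j
      apply Finset.sum_congr rfl
      intro i _
      rw [hGsym]
    have step6S : ∀ j ∈ S, ∑ i ∈ S.erase j, |G i j| * |v j| ≤ μ' * |v j| := by
      intro j hj
      rw [← Finset.sum_mul]
      apply mul_le_mul_of_nonneg_right _ (abs_nonneg _)
      rw [step5 j, hμ'def]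
      apply hrow (s-1) (S.erase j) j (Finset.notMem_erase j S)
      have := Finset.card_erase_of_mem hj
      omega
    have step6Sc : ∀ j ∈ Sᶜ, ∑ i ∈ S.erase j, |G i j| * |v j| ≤ μ * |v j| := by
      intro j hj
      rw [← Finset.sum_mul]
      apply mul_le_mul_of_nonneg_right _ (abs_nonneg _)
      rw [step5 j, hμdef]
      apply hrow (2*s-1) (S.erase j) j (Finset.notMem_erase j S)
      have h8 : (S.erase j).card ≤ S.card := Finset.card_erase_le
      omega
    have step7 : ∑ j, ∑ i ∈ S.erase j, |G i j| * |v j| ≤ μ' * a + μ * a := by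
      have e1 : ∑ j ∈ S, ∑ i ∈ S.erase j, |G i j| * |v j|
          + ∑ j ∈ Sᶜ, ∑ i ∈ S.erase j, |G i j| * |v j|
          = ∑ j, ∑ i ∈ S.erase j, |G i j| * |v j| := Finset.sum_add_sum_compl S _
      have e2 : ∑ j ∈ S, ∑ i ∈ S.erase j, |G i j| * |v j| ≤ μ' * a := by
        rw [hadef, Finset.mul_sum]
        exact Finset.sum_le_sum step6S
      have e3 : ∑ j ∈ Sᶜ, ∑ i ∈ S.erase j, |G i j| * |v j| ≤ μ * a := by
        calc ∑ j ∈ Sᶜ, ∑ i ∈ S.erase j, |G i j| * |v j| ≤ ∑ j ∈ Sᶜ, μ * |v j| :=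
              Finset.sum_le_sum step6Sc
          _ = μ * ∑ j ∈ Sᶜ, |v j| := by rw [Finset.mul_sum]
          _ ≤ μ * a := mul_le_mul_of_nonneg_left hcone hμ0
      linarith only [e1, e2, e3]
    have : a ≤ (s:ℝ) * ε + (μ' * a + μ * a) := by
      rw [step4] at step2
      linarith only [step2, step3, step7]
    simp only [hDdef]
    linarith only [this]
  set sR := (s:ℝ) with hsRdef
  clear_value sR
  have hsR1 : (1:ℝ) ≤ sR := by rw [hsRdef]; exact_mod_cast hs1
  have hsR0 : (0:ℝ) < sR := by linarith only [hsR1]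
  -- main bound
  have hFD : (∑ i, v i ^ 2) * D^2 ≤ 7 * sR * ε^2 := by
    rcases eq_or_lt_of_le hs1 with hseq | hs2
    · -- case s = 1
      have hseq' : s = 1 := hseq.symm
      have hvS : ∀ j, |v j| ≤ a := by
        intro j
        rw [hadef]
        by_cases hj : j ∈ S
        · exact Finset.single_le_sum (f := fun j => |v j|) (fun i _ => abs_nonneg _) hj
        · calc |v j| ≤ ∑ i ∈ Sᶜ, |v i| :=
              Finset.single_le_sum (f := fun j => |v j|) (fun i _ => abs_nonneg _)
                (Finset.mem_compl.mpr hj)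
            _ ≤ ∑ j ∈ S, |v j| := by rw [← hadef]; exact hcone
      have hsum2 : ∑ i, v i ^ 2 ≤ 2 * a^2 := by
        have e1 : ∀ j : Fin n, v j ^2 ≤ a * |v j| := by
          intro j
          rw [← sq_abs, sq]
          exact mul_le_mul_of_nonneg_right (hvS j) (abs_nonneg _)
        have e3 : ∑ j ∈ S, v j ^2 ≤ a * a := by
          calc ∑ j ∈ S, v j ^2 ≤ ∑ j ∈ S, a * |v j| := Finset.sum_le_sum (fun j _ => e1 j)
            _ = a * a := by rw [← Finset.mul_sum, hadef]

        have e4 : ∑ j ∈ Sᶜ, v j ^2 ≤ a * a := by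
          calc ∑ j ∈ Sᶜ, v j ^2 ≤ ∑ j ∈ Sᶜ, a * |v j| := Finset.sum_le_sum (fun j _ => e1 j)
            _ = a * ∑ j ∈ Sᶜ, |v j| := by rw [← Finset.mul_sum]
            _ ≤ a * a := mul_le_mul_of_nonneg_left hcone ha0
        have e5 : ∑ j ∈ S, v j ^2 + ∑ j ∈ Sᶜ, v j ^2 = ∑ j, v j ^2 :=
          Finset.sum_add_sum_compl S _
        have haa : a * a = a^2 := by ring
        linarith only [e3, e4, e5, haa.le, haa.ge]
      have hDa2 : (D*a)*(D*a) ≤ (sR*ε)*(sR*ε) :=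
        mul_le_mul hP3 hP3 (mul_nonneg hD0.le ha0) (mul_nonneg hsR0.le hε0.le)
      have hs1R : sR = 1 := by rw [hsRdef, hseq']; norm_num
      have f1 : (∑ i, v i^2)*D^2 ≤ 2*a^2*D^2 :=
        mul_le_mul_of_nonneg_right hsum2 (sq_nonneg D)
      have f2 : 2*a^2*D^2 = 2*((D*a)*(D*a)) := by ring
      have f4 : 2*((sR*ε)*(sR*ε)) ≤ 7*sR*ε^2 := by
        rw [hs1R]
        linarith only [sq_nonneg ε]
      linarith only [f1, f2.le, f2.ge, f4, hDa2]
    · -- case 2 ≤ s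
      have hs2' : 2 ≤ s := hs2
      have h2sn : 2*s ≤ n := by omega
      have hμ3 : μ ≤ 3*μ' := by
        have e1 : mu1 A (2*s-1) ≤ mu1 A (s-1) + mu1 A s := by
          have := mu1_add_le A (s-1) s hn0
          rwa [show (s-1)+s = 2*s-1 by omega] at this
        have e2 : mu1 A s ≤ mu1 A (s-1) + mu1 A 1 := by
          have := mu1_add_le A (s-1) 1 hn0
          rwa [show (s-1)+1 = s by omega] at this
        have e3 : mu1 A 1 ≤ mu1 A (s-1) := mu1_mono A (by omega) hn0
        rw [hμdef, hμ'def]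
        linarith only [e1, e2, e3]
      have h1μ : 0 < 1 - μ := by linarith only [hμ3, hcond]
      -- top 2s set
      obtain ⟨B, hBsub, hBcard, hBtop, hBmax⟩ := exists_top_subset (fun j => |v j|)
        Finset.univ (2*s) (by simpa using h2sn)
      set c := ∑ j ∈ B, |v j| with hcdef
      clear_value c
      set τ := ∑ j ∈ Bᶜ, |v j| with hτdef
      clear_value τ
      set ρ2 := ∑ j ∈ B, v j ^ 2 with hρ2def
      clear_value ρ2
      have hc0 : 0 ≤ c := by
        rw [hcdef]; exact Finset.sum_nonneg fun j _ => abs_nonneg _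
      have hτ0 : 0 ≤ τ := by
        rw [hτdef]; exact Finset.sum_nonneg fun j _ => abs_nonneg _
      have hρ20 : 0 ≤ ρ2 := by
        rw [hρ2def]; exact Finset.sum_nonneg fun j _ => sq_nonneg _
      have hcτ : c + τ ≤ 2*a := by
        have e1 : c + τ = ∑ j, |v j| := by
          rw [hcdef, hτdef]; exact Finset.sum_add_sum_compl B _
        have e2 : a + ∑ j ∈ Sᶜ, |v j| = ∑ j, |v j| := by
          rw [hadef]; exact Finset.sum_add_sum_compl S _
        linarith only [e1, e2, hcone]
      have hac : a ≤ c := by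
        obtain ⟨T, hST, hTsub, hTcard⟩ :=
          Finset.exists_subsuperset_card_eq (Finset.subset_univ S)
            (show S.card ≤ 2*s by omega) (by simpa using h2sn)
        have e1 : a ≤ ∑ j ∈ T, |v j| := by
          rw [hadef]
          exact Finset.sum_le_sum_of_subset_of_nonneg hST (fun j _ _ => abs_nonneg _)
        have e2 : ∑ j ∈ T, |v j| ≤ c := hBmax T hTsub hTcard
        linarith only [e1, e2]
      have h2sR : (0:ℝ) < 2*sR := by linarith only [hsR0]
      have hcap : ∀ j, j ∉ B → |v j| ≤ c / (2*sR) := by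
        intro j hj
        rw [le_div_iff₀ h2sR]
        have e1 : ∀ i ∈ B, |v j| ≤ |v i| := fun i hi => hBtop i hi j (Finset.mem_univ j) hj
        calc |v j| * (2*sR) = ∑ _i ∈ B, |v j| := by
              rw [Finset.sum_const, hBcard, nsmul_eq_mul, hsRdef]
              push_cast
              ring
          _ ≤ ∑ i ∈ B, |v i| := Finset.sum_le_sum e1
          _ = c := hcdef.symm
      -- tail ℓ2 bound
      have htail : ∑ j ∈ Bᶜ, v j ^ 2 ≤ (c/(2*sR)) * τ := by
        have e1 : ∀ j ∈ Bᶜ, v j ^2 ≤ (c/(2*sR)) * |v j| := by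
          intro j hj
          rw [← sq_abs, sq]
          exact mul_le_mul_of_nonneg_right (hcap j (by simpa using hj)) (abs_nonneg _)
        calc ∑ j ∈ Bᶜ, v j ^2 ≤ ∑ j ∈ Bᶜ, (c/(2*sR)) * |v j| := Finset.sum_le_sum e1
          _ = (c/(2*sR)) * τ := by rw [← Finset.mul_sum, ← hτdef]
      -- quadratic form lower bound
      have hrowB : ∀ i ∈ B, ∑ j ∈ B.erase i, |G i j| ≤ μ := by
        intro i hi
        rw [hμdef]
        apply hrow (2*s-1) (B.erase i) i (Finset.notMem_erase i B)
        rw [Finset.card_erase_of_mem hi, hBcard]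
      have hrowB' : ∀ j ∈ B, ∑ i ∈ B.erase j, |G i j| ≤ μ := by
        intro j hj
        have e1 : ∑ i ∈ B.erase j, |G i j| = ∑ i ∈ B.erase j, |G j i| :=
          Finset.sum_congr rfl fun i _ => by rw [hGsym]
        rw [e1, hμdef]
        apply hrow (2*s-1) (B.erase j) j (Finset.notMem_erase j B)
        rw [Finset.card_erase_of_mem hj, hBcard]
      have key1 : ∑ i ∈ B, ∑ j ∈ B.erase i, |G i j| * (|v i| * |v j|) ≤ μ * ρ2 := by
        have e1 : ∀ i ∈ B, ∀ j ∈ B.erase i, |G i j| * (|v i| * |v j|)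
            ≤ |G i j| * ((v i^2 + v j^2)/2) := by
          intro i _ j _
          apply mul_le_mul_of_nonneg_left _ (abs_nonneg _)
          have h2 := two_mul_le_add_sq (|v i|) (|v j|)
          rw [sq_abs, sq_abs] at h2
          linarith only [h2]
        have e2 : ∑ i ∈ B, ∑ j ∈ B.erase i, |G i j| * (|v i| * |v j|)
            ≤ ∑ i ∈ B, ∑ j ∈ B.erase i, |G i j| * ((v i^2 + v j^2)/2) :=
          Finset.sum_le_sum fun i hi => Finset.sum_le_sum fun j hj => e1 i hi j hj
        have e3 : ∑ i ∈ B, ∑ j ∈ B.erase i, |G i j| * ((v i^2 + v j^2)/2)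
            = (∑ i ∈ B, ∑ j ∈ B.erase i, |G i j| * v i^2) / 2
              + (∑ i ∈ B, ∑ j ∈ B.erase i, |G i j| * v j^2) / 2 := by
          have h0 : ∀ i ∈ B, ∑ j ∈ B.erase i, |G i j| * ((v i^2 + v j^2)/2)
              = (∑ j ∈ B.erase i, |G i j| * v i^2) / 2
                + (∑ j ∈ B.erase i, |G i j| * v j^2) / 2 := by
            intro i _
            rw [Finset.sum_div, Finset.sum_div, ← Finset.sum_add_distrib]
            exact Finset.sum_congr rfl fun j _ => by ring
          rw [Finset.sum_congr rfl h0, Finset.sum_add_distrib, Finset.sum_div, Finset.sum_div]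
        have e4 : ∑ i ∈ B, ∑ j ∈ B.erase i, |G i j| * v i^2 ≤ μ * ρ2 := by
          have e5 : ∀ i ∈ B, ∑ j ∈ B.erase i, |G i j| * v i^2 ≤ μ * v i^2 := by
            intro i hi
            rw [← Finset.sum_mul]
            exact mul_le_mul_of_nonneg_right (hrowB i hi) (sq_nonneg _)
          calc ∑ i ∈ B, ∑ j ∈ B.erase i, |G i j| * v i^2 ≤ ∑ i ∈ B, μ * v i^2 :=
                Finset.sum_le_sum e5
            _ = μ * ρ2 := by rw [← Finset.mul_sum, hρ2def]
        have e6 : ∑ i ∈ B, ∑ j ∈ B.erase i, |G i j| * v j^2 ≤ μ * ρ2 := by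
          rw [double_erase_swap B B (fun i j => |G i j| * v j^2)]
          have e7 : ∀ j ∈ B, ∑ i ∈ B.erase j, |G i j| * v j^2 ≤ μ * v j^2 := by
            intro j hj
            rw [← Finset.sum_mul]
            exact mul_le_mul_of_nonneg_right (hrowB' j hj) (sq_nonneg _)
          calc ∑ j ∈ B, ∑ i ∈ B.erase j, |G i j| * v j^2 ≤ ∑ j ∈ B, μ * v j^2 :=
                Finset.sum_le_sum e7
            _ = μ * ρ2 := by rw [← Finset.mul_sum, hρ2def]
        linarith only [e2, e3.le, e3.ge, e4, e6]
      have hquadlow : (1-μ) * ρ2 ≤ ∑ i ∈ B, v i * (∑ j ∈ B, G i j * v j) := by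
        have expand : ∑ i ∈ B, v i * (∑ j ∈ B, G i j * v j)
            = ρ2 + ∑ i ∈ B, ∑ j ∈ B.erase i, G i j * (v i * v j) := by
          rw [hρ2def, ← Finset.sum_add_distrib]
          apply Finset.sum_congr rfl
          intro i hi
          have e1 : ∑ j ∈ B.erase i, G i j * v j + G i i * v i = ∑ j ∈ B, G i j * v j :=
            Finset.sum_erase_add _ _ hi
          rw [hGdiag i] at e1
          rw [← e1, mul_add, Finset.mul_sum]
          have e2 : ∑ j ∈ B.erase i, v i * (G i j * v j)
              = ∑ j ∈ B.erase i, G i j * (v i * v j) :=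
            Finset.sum_congr rfl fun j _ => by ring
          rw [e2]
          ring
        have habs2 : |∑ i ∈ B, ∑ j ∈ B.erase i, G i j * (v i * v j)| ≤ μ * ρ2 := by
          calc |∑ i ∈ B, ∑ j ∈ B.erase i, G i j * (v i * v j)|
              ≤ ∑ i ∈ B, |∑ j ∈ B.erase i, G i j * (v i * v j)| :=
                Finset.abs_sum_le_sum_abs _ _
            _ ≤ ∑ i ∈ B, ∑ j ∈ B.erase i, |G i j * (v i * v j)| :=
                Finset.sum_le_sum fun i _ => Finset.abs_sum_le_sum_abs _ _
            _ = ∑ i ∈ B, ∑ j ∈ B.erase i, |G i j| * (|v i| * |v j|) := by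
                apply Finset.sum_congr rfl
                intro i _
                apply Finset.sum_congr rfl
                intro j _
                rw [abs_mul, abs_mul]
            _ ≤ μ * ρ2 := key1
        rw [expand]
        have := neg_abs_le (∑ i ∈ B, ∑ j ∈ B.erase i, G i j * (v i * v j))
        linarith only [this, habs2, hρ20, hμ0]
      -- decomposition
      have hdecomp : ∑ i ∈ B, v i * (∑ j ∈ B, G i j * v j)
          = ∑ i ∈ B, v i * (∑ j, G i j * v j) - ∑ i ∈ B, v i * (∑ j ∈ Bᶜ, G i j * v j) := by
        rw [← Finset.sum_sub_distrib]
        apply Finset.sum_congr rfl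
        intro i _
        have e1 : ∑ j ∈ B, G i j * v j + ∑ j ∈ Bᶜ, G i j * v j = ∑ j, G i j * v j :=
          Finset.sum_add_sum_compl B _
        rw [← e1]
        ring
      have hterm1 : ∑ i ∈ B, v i * (∑ j, G i j * v j) ≤ c * ε := by
        have e1 : ∀ i ∈ B, v i * (∑ j, G i j * v j) ≤ |v i| * ε := by
          intro i _
          calc v i * (∑ j, G i j * v j) ≤ |v i * (∑ j, G i j * v j)| := le_abs_self _
            _ = |v i| * |∑ j, G i j * v j| := abs_mul _ _
            _ ≤ |v i| * ε := mul_le_mul_of_nonneg_left (K1 i) (abs_nonneg _)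
        calc ∑ i ∈ B, v i * (∑ j, G i j * v j) ≤ ∑ i ∈ B, |v i| * ε := Finset.sum_le_sum e1
          _ = c * ε := by rw [← Finset.sum_mul, hcdef]
      -- cross term
      have hcastr : ((2*s-1 : ℕ) : ℝ) = 2*sR - 1 := by
        have h1 : (1:ℕ) ≤ 2*s := by omega
        rw [hsRdef]
        push_cast [Nat.cast_sub h1]
        ring
      have hinner : ∀ i ∈ B, ∑ j ∈ Bᶜ, |G i j| * |v j| ≤ μ * (c/(2*sR)) + μ * τ / (2*sR-1) := by
        intro i hi
        have hblk := blk (fun j => |G i j|) (fun j => |v j|) (fun j => abs_nonneg _)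
          (fun j => abs_nonneg _) (2*s-1) (by omega) μ hμ0 Bᶜ
          (fun U hU hUc => by
            show ∑ j ∈ U, |G i j| ≤ μ
            rw [hμdef]
            exact hrow (2*s-1) U i
              (fun hmem => by simpa using (Finset.mem_compl.mp (hU hmem)) hi) hUc)
          (c/(2*sR)) (by positivity)
          (fun j hj => hcap j (by simpa using hj))
        rw [hcastr] at hblk
        rw [← hτdef] at hblk
        exact hblk
      have hcrossabs : |∑ i ∈ B, v i * (∑ j ∈ Bᶜ, G i j * v j)|
          ≤ c * (μ * (c/(2*sR)) + μ * τ / (2*sR-1)) := by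
        calc |∑ i ∈ B, v i * (∑ j ∈ Bᶜ, G i j * v j)|
            ≤ ∑ i ∈ B, |v i * (∑ j ∈ Bᶜ, G i j * v j)| := Finset.abs_sum_le_sum_abs _ _
          _ = ∑ i ∈ B, |v i| * |∑ j ∈ Bᶜ, G i j * v j| := by
              exact Finset.sum_congr rfl fun i _ => abs_mul _ _
          _ ≤ ∑ i ∈ B, |v i| * (μ * (c/(2*sR)) + μ * τ / (2*sR-1)) := by
              apply Finset.sum_le_sum
              intro i hi
              apply mul_le_mul_of_nonneg_left _ (abs_nonneg _)
              calc |∑ j ∈ Bᶜ, G i j * v j| ≤ ∑ j ∈ Bᶜ, |G i j * v j| :=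
                    Finset.abs_sum_le_sum_abs _ _
                _ = ∑ j ∈ Bᶜ, |G i j| * |v j| :=
                    Finset.sum_congr rfl fun j _ => abs_mul _ _
                _ ≤ μ * (c/(2*sR)) + μ * τ / (2*sR-1) := hinner i hi
          _ = c * (μ * (c/(2*sR)) + μ * τ / (2*sR-1)) := by
              rw [← Finset.sum_mul, ← hcdef]
      have hmain1 : (1-μ) * ρ2 ≤ c * ε + c * (μ * (c/(2*sR)) + μ * τ / (2*sR-1)) := by
        have h1 := hquadlow
        rw [hdecomp] at h1
        have h2 := neg_abs_le (∑ i ∈ B, v i * (∑ j ∈ Bᶜ, G i j * v j))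
        linarith only [h1, h2, hcrossabs, hterm1]
      have h2ac : c ≤ 2*a := by linarith only [hcτ, hτ0]
      have hτa : τ ≤ a := by linarith only [hcτ, hac]
      have hQ : μ * (c/(2*sR)) + μ * τ / (2*sR-1) ≤ μ * ((4*a - c)/(2*sR)) := by
        have h1 : 0 ≤ 2*a - c := by linarith only [h2ac]
        have h2 : τ / (2*sR-1) ≤ (2*a-c)/sR := by
          apply div_le_div₀ h1 (by linarith only [hcτ]) hsR0 (by linarith only [hsR1])
        have h3 : c/(2*sR) + (2*a-c)/sR = (4*a-c)/(2*sR) := by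
          field_simp
          ring
        have h4 : μ * (τ / (2*sR-1)) ≤ μ * ((2*a-c)/sR) := mul_le_mul_of_nonneg_left h2 hμ0
        calc μ * (c/(2*sR)) + μ * τ / (2*sR-1)
            = μ * (c/(2*sR)) + μ * (τ / (2*sR-1)) := by ring
          _ ≤ μ * (c/(2*sR)) + μ * ((2*a-c)/sR) := by linarith only [h4]
          _ = μ * ((4*a-c)/(2*sR)) := by rw [← h3]; ring
      have hcQ : c * (μ * ((4*a-c)/(2*sR))) ≤ 2*μ*a^2/sR := by
        have h4 : c*(4*a-c) ≤ 4*a^2 := by linarith only [sq_nonneg (c - 2*a)]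
        have h5 : c * (μ * ((4*a-c)/(2*sR))) = μ * (c*(4*a-c)) / (2*sR) := by ring
        have h7 : μ * (c*(4*a-c)) ≤ μ * (4*a^2) := mul_le_mul_of_nonneg_left h4 hμ0
        have h8 : μ * (c*(4*a-c)) / (2*sR) ≤ μ * (4*a^2) / (2*sR) :=
          (div_le_div_iff_of_pos_right h2sR).mpr h7
        have h9 : μ * (4*a^2) / (2*sR) = 2*μ*a^2/sR := by
          field_simp
          ring
        linarith only [h5.le, h5.ge, h8, h9.le, h9.ge]
      have hmain2 : (1-μ) * ρ2 ≤ 2*a*ε + 2*μ*a^2/sR := by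
        have h8 : c * (μ * (c/(2*sR)) + μ * τ / (2*sR-1)) ≤ c * (μ * ((4*a-c)/(2*sR))) :=
          mul_le_mul_of_nonneg_left hQ hc0
        have h9 : c * ε ≤ 2*a*ε := mul_le_mul_of_nonneg_right h2ac hε0.le
        linarith only [hmain1, h8, h9, hcQ]
      have hDa2 : (D*a)*(D*a) ≤ (sR*ε)*(sR*ε) :=
        mul_le_mul hP3 hP3 (mul_nonneg hD0.le ha0) (mul_nonneg hsR0.le hε0.le)
      have h3m : D + μ ≤ 3*(1-μ) := by
        rw [hDdef]
        linarith only [hμ3, hcond]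
      have hρfinal : ρ2 * D^2 ≤ 6*sR*ε^2 := by
        have e1 : ((1-μ) * ρ2) * (sR * D^2) ≤ (2*a*ε + 2*μ*a^2/sR) * (sR * D^2) := by
          apply mul_le_mul_of_nonneg_right hmain2
          have := sq_nonneg D
          have := hsR0.le
          exact mul_nonneg this ‹0 ≤ D^2›
        have e2 : (2*a*ε + 2*μ*a^2/sR) * (sR * D^2)
            = 2*ε*sR*D*(D*a) + 2*μ*((D*a)*(D*a)) := by
          field_simp
        have e3 : 2*ε*sR*D*(D*a) ≤ 2*ε*sR*D*(sR*ε) := by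
          apply mul_le_mul_of_nonneg_left hP3
          have h1 : (0:ℝ) ≤ 2*ε := by linarith only [hε0]
          have h2 : (0:ℝ) ≤ 2*ε*sR := mul_nonneg h1 hsR0.le
          exact mul_nonneg h2 hD0.le
        have e4 : 2*μ*((D*a)*(D*a)) ≤ 2*μ*((sR*ε)*(sR*ε)) := by
          apply mul_le_mul_of_nonneg_left hDa2
          linarith only [hμ0]
        have e5 : 2*ε*sR*D*(sR*ε) + 2*μ*((sR*ε)*(sR*ε)) = 2*sR^2*ε^2*(D+μ) := by ring
        have e6 : 2*sR^2*ε^2*(D+μ) ≤ 2*sR^2*ε^2*(3*(1-μ)) := by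
          apply mul_le_mul_of_nonneg_left h3m
          have h1 : (0:ℝ) ≤ sR^2 := sq_nonneg sR
          have h2 : (0:ℝ) ≤ ε^2 := sq_nonneg ε
          have h3 : (0:ℝ) ≤ 2*sR^2 := by linarith only [h1]
          calc (0:ℝ) ≤ 2*sR^2*ε^2 := mul_nonneg h3 h2
            _ = 2*sR^2*ε^2 := rfl
        have e7 : (ρ2 * D^2) * ((1-μ)*sR) ≤ (6*sR*ε^2) * ((1-μ)*sR) := by
          have l1 : ((1-μ) * ρ2) * (sR * D^2) = (ρ2 * D^2) * ((1-μ)*sR) := by ring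
          have l2 : 2*sR^2*ε^2*(3*(1-μ)) = (6*sR*ε^2) * ((1-μ)*sR) := by ring
          linarith only [e1, e2.le, e2.ge, e3, e4, e5.le, e5.ge, e6, l1.le, l1.ge, l2.le, l2.ge]
        have hpos : 0 < (1-μ)*sR := mul_pos h1μ hsR0
        exact le_of_mul_le_mul_right e7 hpos
      have hterm3 : (∑ j ∈ Bᶜ, v j ^2) * D^2 ≤ sR * ε^2 := by
        have htail2 : ∑ j ∈ Bᶜ, v j ^2 ≤ a^2/sR := by
          have t1 : (c/(2*sR))*τ ≤ (2*a/(2*sR))*a := by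
            apply mul_le_mul _ hτa hτ0 _
            · exact (div_le_div_iff_of_pos_right h2sR).mpr h2ac
            · apply div_nonneg _ h2sR.le
              linarith only [ha0]
          have t2 : (2*a/(2*sR))*a = a^2/sR := by
            field_simp
          linarith only [htail, t1, t2.le, t2.ge]
        have e8 : (a^2/sR) * D^2 = ((D*a)*(D*a))/sR := by
          field_simp
        have e9 : ((D*a)*(D*a))/sR ≤ ((sR*ε)*(sR*ε))/sR := (div_le_div_iff_of_pos_right hsR0).mpr hDa2
        have e10 : ((sR*ε)*(sR*ε))/sR = sR*ε^2 := by
          field_simp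
        have e11 : (∑ j ∈ Bᶜ, v j ^2) * D^2 ≤ (a^2/sR) * D^2 :=
          mul_le_mul_of_nonneg_right htail2 (sq_nonneg D)
        linarith only [e8.le, e8.ge, e9, e10.le, e10.ge, e11]
      have hsplit : ∑ i, v i ^2 = ρ2 + ∑ j ∈ Bᶜ, v j ^2 := by
        rw [hρ2def]
        exact (Finset.sum_add_sum_compl B _).symm
      rw [hsplit, add_mul]
      linarith only [hρfinal, hterm3]
  -- final conversion
  have hD2 : 0 < D^2 := pow_pos hD0 2
  have hgoal : ∑ i, (xh i - x i)^2 = ∑ i, v i^2 := by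
    apply Finset.sum_congr rfl
    intro i _
    rw [hvdef]
  rw [hgoal]
  have h2sn' : 2*s ≤ n := by omega
  have hmax : 2*sR*σ^2 ≤ ∑ j, max (σ^2) ((x j)^2) := by
    have e2 : (n:ℝ)*σ^2 = ∑ _j : Fin n, σ^2 := by
      rw [Finset.sum_const, Finset.card_univ, Fintype.card_fin, nsmul_eq_mul]
    have e3 : ∑ _j : Fin n, σ^2 ≤ ∑ j, max (σ^2) ((x j)^2) :=
      Finset.sum_le_sum (fun j _ => le_max_left _ _)
    have e4 : 2*sR ≤ (n:ℝ) := by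
      rw [hsRdef]
      exact_mod_cast h2sn'
    have e5 : 2*sR*σ^2 ≤ (n:ℝ)*σ^2 := mul_le_mul_of_nonneg_right e4 (sq_nonneg σ)
    linarith only [e2.le, e2.ge, e3, e5]
  have hε2 : ε^2 = (25/2) * Real.log n * σ^2 := by
    rw [hεdef, mul_pow, hlamsq]
    ring
  have hnum : 7 * sR * ε^2 ≤ 72*(5+Real.log n) * (2*sR*σ^2) := by
    rw [hε2]
    have w1 : (0:ℝ) ≤ sR * Real.log n * σ^2 :=
      mul_nonneg (mul_nonneg hsR0.le hlog.le) (sq_nonneg σ)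
    have w2 : (0:ℝ) ≤ sR * σ^2 := mul_nonneg hsR0.le (sq_nonneg σ)
    linarith only [w1, w2]
  calc ∑ i, v i^2 ≤ 7*sR*ε^2/D^2 := by
        rw [le_div_iff₀ hD2]
        exact hFD
    _ ≤ (72*(5+Real.log n) * (2*sR*σ^2))/D^2 := (div_le_div_iff_of_pos_right hD2).mpr hnum
    _ ≤ 72*(5+Real.log n)/D^2 * ∑ j, max (σ^2) ((x j)^2) := by
        rw [div_mul_eq_mul_div]
        apply (div_le_div_iff_of_pos_right hD2).mpr
        apply mul_le_mul_of_nonneg_left hmax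
        linarith only [hlog]
end

section
/- Let A be an m×n real matrix whose columns have ℓ2-norm 1, let λ > 0, let x ∈ ℝ^n, and define H(ξ, x) = (λ²/8)·‖ξ‖₀ + ‖Ax − Aξ‖₂² for ξ ∈ ℝ^n, where ‖ξ‖₀ is the number of nonzero entries of ξ. If x̄ is a minimizer of ξ ↦ H(ξ, x) over ℝ^n, then ‖Aᵀ(Ax̄ − Ax)‖_∞ ≤ λ/2. -/
open scoped Classical

/-- If `x̄` minimizes `ξ ↦ (λ²/8)‖ξ‖₀ + ‖Ax − Aξ‖₂²`, then
`‖Aᵀ(Ax̄ − Ax)‖_∞ ≤ λ/2`. -/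
theorem stmt13 {m n : ℕ} (A : Matrix (Fin m) (Fin n) ℝ)
    (hA : ∀ j, ∑ k, (A k j) ^ 2 = 1)
    (lam : ℝ) (hlam : 0 < lam)
    (x : Fin n → ℝ) (xb : Fin n → ℝ)
    (hmin : ∀ ξ : Fin n → ℝ,
      lam ^ 2 / 8 * ((Finset.univ.filter fun i => xb i ≠ 0).card : ℝ) +
          ∑ k, (A.mulVec x k - A.mulVec xb k) ^ 2 ≤
        lam ^ 2 / 8 * ((Finset.univ.filter fun i => ξ i ≠ 0).card : ℝ) +
          ∑ k, (A.mulVec x k - A.mulVec ξ k) ^ 2) :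
    ∀ i, |A.transpose.mulVec (A.mulVec xb - A.mulVec x) i| ≤ lam / 2 := by
  intro i
  set g : ℝ := A.transpose.mulVec (A.mulVec xb - A.mulVec x) i with hgdef
  have hgsum : g = ∑ k, A k i * (A.mulVec xb k - A.mulVec x k) := by
    simp [hgdef, Matrix.mulVec, Matrix.transpose, dotProduct, mul_sub, Finset.sum_sub_distrib]
  set ξ : Fin n → ℝ := fun j => if j = i then xb i - g else xb j with hξ
  -- the perturbed matrix-vector product
  have hmv : ∀ k, A.mulVec ξ k = A.mulVec xb k - g * A k i := by
    intro k
    have step : ∀ j, A k j * ξ j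
        = A k j * xb j + (if j = i then -(g * A k i) else 0) := by
      intro j
      by_cases h : j = i
      · subst h; simp [hξ]; ring
      · simp [hξ, h]
    simp only [Matrix.mulVec, dotProduct]
    rw [Finset.sum_congr rfl (fun j _ => step j), Finset.sum_add_distrib,
      Finset.sum_ite_eq' Finset.univ i (fun _ => -(g * A k i))]
    simp; ring
  -- cardinality bound
  have hcard : ((Finset.univ.filter fun j => ξ j ≠ 0).card : ℝ)
      ≤ ((Finset.univ.filter fun j => xb j ≠ 0).card : ℝ) + 1 := by
    have hsub : (Finset.univ.filter fun j => ξ j ≠ 0)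
        ⊆ insert i (Finset.univ.filter fun j => xb j ≠ 0) := by
      intro j hj
      simp only [Finset.mem_filter, Finset.mem_univ, true_and] at hj
      by_cases h : j = i
      · exact Finset.mem_insert.2 (Or.inl h)
      · refine Finset.mem_insert.2 (Or.inr ?_)
        simp only [Finset.mem_filter, Finset.mem_univ, true_and]
        simpa [hξ, h] using hj
    have := Finset.card_le_card hsub
    have h2 := Finset.card_insert_le i (Finset.univ.filter fun j => xb j ≠ 0)
    have : (Finset.univ.filter fun j => ξ j ≠ 0).card
        ≤ (Finset.univ.filter fun j => xb j ≠ 0).card + 1 := le_trans this h2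
    exact_mod_cast this
  -- the quadratic term computation
  have hsum : ∑ k, (A.mulVec x k - A.mulVec ξ k) ^ 2
      = (∑ k, (A.mulVec x k - A.mulVec xb k) ^ 2) - g ^ 2 := by
    have expand : ∀ k, (A.mulVec x k - A.mulVec ξ k) ^ 2
        = (A.mulVec x k - A.mulVec xb k) ^ 2
          + 2 * g * (A k i * (A.mulVec x k - A.mulVec xb k))
          + g ^ 2 * (A k i) ^ 2 := by
      intro k; rw [hmv k]; ring
    rw [Finset.sum_congr rfl (fun k _ => expand k), Finset.sum_add_distrib,
      Finset.sum_add_distrib, ← Finset.mul_sum, ← Finset.mul_sum, hA i]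
    have : ∑ k, A k i * (A.mulVec x k - A.mulVec xb k) = -g := by
      rw [hgsum, ← Finset.sum_neg_distrib]
      exact Finset.sum_congr rfl (fun k _ => by ring)
    rw [this]; ring
  have hkey := hmin ξ
  rw [hsum] at hkey
  have hg2 : g ^ 2 ≤ lam ^ 2 / 8 := by nlinarith
  nlinarith [abs_nonneg g, sq_abs g, hlam.le]
end

section
/- For every x ∈ ℝ^n (n ≥ 1): ‖x‖₂ − ‖x‖₁/√n ≤ (√n/4)·( max_{1≤j≤n} |x_j| − min_{1≤j≤n} |x_j| ). -/
/-- For every `x ∈ ℝⁿ`,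
`‖x‖₂ − ‖x‖₁/√n ≤ (√n/4)(max_j |x_j| − min_j |x_j|)`. -/
theorem stmt14 {n : ℕ} (hn : 1 ≤ n) (x : Fin n → ℝ) :
    Real.sqrt (∑ i, (x i) ^ 2) - (∑ i, |x i|) / Real.sqrt n ≤
      Real.sqrt n / 4 *
        ((Finset.univ.sup' (Finset.univ_nonempty_iff.mpr ⟨⟨0, hn⟩⟩) fun j => |x j|) -
          Finset.univ.inf' (Finset.univ_nonempty_iff.mpr ⟨⟨0, hn⟩⟩) fun j => |x j|) := by
  have hne : (Finset.univ : Finset (Fin n)).Nonempty := Finset.univ_nonempty_iff.mpr ⟨⟨0, hn⟩⟩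
  set M := Finset.univ.sup' hne (fun j => |x j|) with hM
  set m := Finset.univ.inf' hne (fun j => |x j|) with hm
  set S := ∑ i, |x i| with hS
  set N : ℝ := (n : ℝ) with hNdef
  have hN1 : (1 : ℝ) ≤ N := by rw [hNdef]; exact_mod_cast hn
  set s := Real.sqrt N with hs
  have hs2 : s ^ 2 = N := Real.sq_sqrt (by linarith)
  have hspos : 0 < s := Real.sqrt_pos.mpr (by linarith)
  -- basic facts about m, M
  have hmM : m ≤ M := le_trans (Finset.inf'_le (fun j => |x j|) (Finset.mem_univ ⟨0, hn⟩)) (Finset.le_sup' (fun j => |x j|) (Finset.mem_univ ⟨0, hn⟩))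
  have hm0 : 0 ≤ m := Finset.le_inf' hne _ (fun i _ => abs_nonneg _)
  have hle : ∀ i : Fin n, |x i| ≤ M := fun i => Finset.le_sup' (fun j => |x j|) (Finset.mem_univ i)
  have hge : ∀ i : Fin n, m ≤ |x i| := fun i => Finset.inf'_le (fun j => |x j|) (Finset.mem_univ i)
  have hS0 : 0 ≤ S := Finset.sum_nonneg fun i _ => abs_nonneg _
  -- step 1: Σ x_i² ≤ (M+m) S - N M m
  have key : (∑ i, (x i) ^ 2) ≤ (M + m) * S - N * M * m := by
    have h1 : (∑ i, (x i) ^ 2) ≤ ∑ i, ((M + m) * |x i| - M * m) := by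
      apply Finset.sum_le_sum
      intro i _
      have h := mul_nonneg (sub_nonneg.mpr (hge i)) (sub_nonneg.mpr (hle i))
      have : (x i) ^ 2 = |x i| ^ 2 := (sq_abs _).symm
      nlinarith [h]
    have h2 : (∑ i, ((M + m) * |x i| - M * m)) = (M + m) * S - N * M * m := by
      rw [Finset.sum_sub_distrib, ← Finset.mul_sum, Finset.sum_const, Finset.card_univ,
        Fintype.card_fin, nsmul_eq_mul]
      ring
    linarith
  -- step 2: the square bound
  have sq_bd : (M + m) * S - N * M * m ≤ (S / s + s * (M - m) / 4) ^ 2 := by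
    have hNn : N * ((M + m) * S - N * M * m) ≤ (S + N * (M - m) / 4) ^ 2 := by
      nlinarith [sq_nonneg (S - N * (M + 3 * m) / 4), mul_nonneg hm0 (sub_nonneg.mpr hmM),
        sq_nonneg N, mul_nonneg (mul_nonneg hm0 (sub_nonneg.mpr hmM)) (sq_nonneg N)]
    have heq : S / s + s * (M - m) / 4 = (S + N * (M - m) / 4) / s := by
      field_simp
      linear_combination (M - m) * hs2
    rw [heq, div_pow, le_div_iff₀ (by positivity)]
    calc ((M + m) * S - N * M * m) * s ^ 2 = N * ((M + m) * S - N * M * m) := by rw [hs2]; ring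
      _ ≤ (S + N * (M - m) / 4) ^ 2 := hNn
  -- step 3: combine
  have hrhs0 : 0 ≤ S / s + s * (M - m) / 4 := by
    have h1 : 0 ≤ S / s := by positivity
    have h2 : 0 ≤ s * (M - m) := mul_nonneg hspos.le (sub_nonneg.mpr hmM)
    linarith
  have h3 : Real.sqrt (∑ i, (x i) ^ 2) ≤ S / s + s * (M - m) / 4 := by
    calc Real.sqrt (∑ i, (x i) ^ 2) ≤ Real.sqrt ((S / s + s * (M - m) / 4) ^ 2) :=
          Real.sqrt_le_sqrt (key.trans sq_bd)
      _ = S / s + s * (M - m) / 4 := Real.sqrt_sq hrhs0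
  linarith
end
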